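/- arXiv:math/0703343 — 4 statements merged into one kernel-verified Lean document; each statement's English description precedes it below -/
import Mathlib

section
/- Let G be a finite group of order n such that every nontrivial complex representation of G has degree at least k (k ≥ 1). If A, B, C are three subsets of G such that |A|·|B|·|C| > n³/k, then there exists a triple (a, b, c) ∈ A × B × C with a·b = c. -/
open Finset
open scoped ComplexInnerProductSpace
set_option linter.unusedSectionVars false
attribute [local instance] Classical.propDecidable

namespace GowersAux

variable {G : Type} [Group G] [Fintype G]

noncomputable def Tmap (B : Finset G) : EuclideanSpace ℂ G →ₗ[ℂ] EuclideanSpace ℂ G where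
  toFun f := WithLp.toLp 2 (fun x => ∑ b ∈ B, f (x * b⁻¹))
  map_add' f g := by ext x; simp [Finset.sum_add_distrib]
  map_smul' c f := by ext x; simp [Finset.mul_sum]

noncomputable def Tadj (B : Finset G) : EuclideanSpace ℂ G →ₗ[ℂ] EuclideanSpace ℂ G where
  toFun f := WithLp.toLp 2 (fun x => ∑ b ∈ B, f (x * b))
  map_add' f g := by ext x; simp [Finset.sum_add_distrib]
  map_smul' c f := by ext x; simp [Finset.mul_sum]

noncomputable def Smap (B : Finset G) : EuclideanSpace ℂ G →ₗ[ℂ] EuclideanSpace ℂ G :=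
  (Tadj B).comp (Tmap B)

noncomputable def Lmap (g : G) : EuclideanSpace ℂ G →ₗ[ℂ] EuclideanSpace ℂ G where
  toFun f := WithLp.toLp 2 (fun x => f (g⁻¹ * x))
  map_add' f g := by ext x; simp
  map_smul' c f := by ext x; simp

@[simp] lemma Tmap_apply (B : Finset G) (f : EuclideanSpace ℂ G) (x : G) :
    Tmap B f x = ∑ b ∈ B, f (x * b⁻¹) := rfl

@[simp] lemma Tadj_apply (B : Finset G) (f : EuclideanSpace ℂ G) (x : G) :
    Tadj B f x = ∑ b ∈ B, f (x * b) := rfl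

@[simp] lemma Lmap_apply (g : G) (f : EuclideanSpace ℂ G) (x : G) :
    Lmap g f x = f (g⁻¹ * x) := rfl

lemma inner_Tadj (B : Finset G) (u v : EuclideanSpace ℂ G) :
    ⟪Tadj B u, v⟫ = ⟪u, Tmap B v⟫ := by
  simp only [PiLp.inner_apply, RCLike.inner_apply, Tadj_apply, Tmap_apply, map_sum,
    Finset.sum_mul, Finset.mul_sum]
  rw [Finset.sum_comm, Finset.sum_comm (s := Finset.univ)]
  refine Finset.sum_congr rfl fun b _ => ?_
  refine Fintype.sum_equiv (Equiv.mulRight b) _ _ fun y => ?_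
  have h : y * b * b⁻¹ = y := mul_inv_cancel_right y b
  simp only [Equiv.coe_mulRight, h]

lemma inner_Tmap (B : Finset G) (u v : EuclideanSpace ℂ G) :
    ⟪Tmap B u, v⟫ = ⟪u, Tadj B v⟫ := by
  rw [← inner_conj_symm, ← inner_Tadj, inner_conj_symm]

lemma Smap_isSymmetric (B : Finset G) : (Smap B).IsSymmetric := by
  intro x y
  show ⟪Tadj B (Tmap B x), y⟫ = ⟪x, Tadj B (Tmap B y)⟫
  rw [inner_Tadj, ← inner_Tmap]

lemma inner_Smap (B : Finset G) (u : EuclideanSpace ℂ G) :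
    ⟪u, Smap B u⟫ = ⟪Tmap B u, Tmap B u⟫ := by
  show ⟪u, Tadj B (Tmap B u)⟫ = _
  rw [← inner_Tmap]

lemma Lmap_comm (B : Finset G) (g : G) (f : EuclideanSpace ℂ G) :
    Smap B (Lmap g f) = Lmap g (Smap B f) := by
  ext x
  show Tadj B (Tmap B (Lmap g f)) x = (Tadj B (Tmap B f)) (g⁻¹ * x)
  simp only [Tadj_apply, Tmap_apply, Lmap_apply]
  refine Finset.sum_congr rfl fun a _ => Finset.sum_congr rfl fun b _ => ?_
  exact congrArg f (by group)

lemma re_inner_self (u : EuclideanSpace ℂ G) :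
    RCLike.re ⟪u, u⟫ = ∑ x, Complex.normSq (u x) := by
  rw [PiLp.inner_apply, map_sum]
  refine Finset.sum_congr rfl fun x _ => ?_
  simp [RCLike.inner_apply, mul_comm, Complex.mul_conj, Complex.normSq_eq_norm_sq, ← Complex.ofReal_pow, Complex.ofReal_re]


lemma mem_eig_Lmap (B : Finset G) (μ : ℂ) (g : G) {f : EuclideanSpace ℂ G}
    (hf : f ∈ Module.End.eigenspace (Smap B) μ) :
    Lmap g f ∈ Module.End.eigenspace (Smap B) μ := by
  rw [Module.End.mem_eigenspace_iff] at hf ⊢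
  rw [Lmap_comm, hf]
  exact map_smul (Lmap g) μ f

noncomputable def rho (B : Finset G) (μ : ℂ) :
    Representation ℂ G (Module.End.eigenspace (Smap B) μ) where
  toFun g := (Lmap g).restrict (fun f hf => mem_eig_Lmap B μ g hf)
  map_one' := by
    refine LinearMap.ext fun z => Subtype.ext ?_
    show Lmap (1:G) (z : EuclideanSpace ℂ G) = (z : EuclideanSpace ℂ G)
    ext x; exact congrArg (z : EuclideanSpace ℂ G) (by group)
  map_mul' g h := by
    refine LinearMap.ext fun z => Subtype.ext ?_
    show Lmap (g*h) (z : EuclideanSpace ℂ G) = Lmap g (Lmap h (z : EuclideanSpace ℂ G))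
    ext x; exact congrArg (z : EuclideanSpace ℂ G) (by group)

noncomputable def gvec (B : Finset G) (x : G) : EuclideanSpace ℂ G :=
  WithLp.toLp 2 (fun y => if y⁻¹ * x ∈ B then (1:ℂ) else 0)

lemma inner_gvec (B : Finset G) (x : G) (u : EuclideanSpace ℂ G) :
    ⟪gvec B x, u⟫ = Tmap B u x := by
  have e : ∀ y : G, x * (y⁻¹ * x)⁻¹ = y := fun y => by group
  calc ⟪gvec B x, u⟫ = ∑ y, if y⁻¹ * x ∈ B then u y else 0 := by
        simp [PiLp.inner_apply, RCLike.inner_apply, gvec, apply_ite (starRingEnd ℂ), ite_mul]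
    _ = ∑ b, if b ∈ B then u (x * b⁻¹) else 0 := by
        refine Fintype.sum_equiv ((Equiv.inv G).trans (Equiv.mulRight x)) _ _ fun y => ?_
        simp only [Equiv.trans_apply, Equiv.inv_apply, Equiv.coe_mulRight]
        rw [e y]
    _ = ∑ b ∈ B, u (x * b⁻¹) := by rw [Finset.sum_ite_mem, Finset.univ_inter]
    _ = Tmap B u x := rfl

lemma re_inner_gvec_self (B : Finset G) (x : G) :
    RCLike.re ⟪gvec B x, gvec B x⟫ = B.card := by
  rw [re_inner_self]
  calc ∑ y, Complex.normSq (gvec B x y)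
      = ∑ y, if y⁻¹ * x ∈ B then (1:ℝ) else 0 := by
        refine Finset.sum_congr rfl fun y _ => ?_
        simp [gvec, apply_ite Complex.normSq]
    _ = ∑ b, if b ∈ B then (1:ℝ) else 0 := by
        refine Fintype.sum_equiv ((Equiv.inv G).trans (Equiv.mulRight x)) _ _ fun y => ?_
        simp only [Equiv.trans_apply, Equiv.inv_apply, Equiv.coe_mulRight]
    _ = B.card := by simp


lemma key (k : ℕ)
    (hrep : ∀ (V : Type) [AddCommGroup V] [Module ℂ V] [FiniteDimensional ℂ V]
      (ρ : Representation ℂ G V), ρ ≠ 1 → k ≤ Module.finrank ℂ V)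
    (B : Finset G) (f₀ : EuclideanSpace ℂ G) (hsum : ∑ x, f₀ x = 0) (hf₀ : f₀ ≠ 0) :
    (k:ℝ) * RCLike.re ⟪Tmap B f₀, Tmap B f₀⟫ ≤
      (Fintype.card G : ℝ) * B.card * RCLike.re ⟪f₀, f₀⟫ := by
  classical
  have hS : (Smap B).IsSymmetric := Smap_isSymmetric B
  have hrank : Module.finrank ℂ (EuclideanSpace ℂ G) = Fintype.card G := finrank_euclideanSpace
  set v := hS.eigenvectorBasis hrank with hv
  set lam := hS.eigenvalues hrank with hlam
  have happ : ∀ i, Smap B (v i) = (lam i : ℂ) • v i := fun i =>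
    hS.apply_eigenvectorBasis hrank i
  set c : Fin (Fintype.card G) → ℂ := fun i => ⟪v i, f₀⟫ with hc
  have hterm : ∀ i, ⟪f₀, v i⟫ * ⟪v i, f₀⟫ = (Complex.normSq (c i) : ℂ) := by
    intro i
    have h1 : ⟪f₀, v i⟫ = (starRingEnd ℂ) (c i) := (inner_conj_symm (f₀ : EuclideanSpace ℂ G) (v i)).symm
    rw [h1, mul_comm]
    exact Complex.mul_conj (c i)
  have hpar : RCLike.re ⟪f₀, f₀⟫ = ∑ i, Complex.normSq (c i) := by
    rw [← OrthonormalBasis.sum_inner_mul_inner v f₀ f₀, map_sum]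
    exact Finset.sum_congr rfl fun i _ => by rw [hterm i]; simp
  have hSf : RCLike.re ⟪f₀, Smap B f₀⟫ = ∑ i, lam i * Complex.normSq (c i) := by
    rw [← OrthonormalBasis.sum_inner_mul_inner v f₀ (Smap B f₀), map_sum]
    refine Finset.sum_congr rfl fun i _ => ?_
    rw [← hS (v i) f₀, happ i, inner_smul_left, Complex.conj_ofReal, ← mul_assoc,
      mul_comm (⟪f₀, v i⟫) ((lam i : ℂ)), mul_assoc, hterm i]
    simp
  have lam_nonneg : ∀ i, 0 ≤ lam i := by
    intro i
    have h1 : ⟪v i, Smap B (v i)⟫ = (lam i : ℂ) := by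
      rw [happ i, inner_smul_right, inner_self_eq_norm_sq_to_K, v.orthonormal.1 i]
      simp
    have h2 : RCLike.re ⟪v i, Smap B (v i)⟫ = lam i := by rw [h1]; simp
    rw [← h2, inner_Smap]
    exact inner_self_nonneg
  have hex : ∃ i, c i ≠ 0 := by
    by_contra hno
    push_neg at hno
    apply hf₀
    have hz : v.repr f₀ = 0 := by
      ext i
      simpa [OrthonormalBasis.repr_apply_apply] using hno i
    have := congrArg v.repr.symm hz
    simpa using this
  set I := Finset.univ.filter (fun i => c i ≠ 0) with hI
  have hInon : I.Nonempty := by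
    obtain ⟨i, hi⟩ := hex
    exact ⟨i, by simp [hI, hi]⟩
  obtain ⟨i₀, hi₀I, hmax⟩ := I.exists_max_image lam hInon
  have hc₀ : c i₀ ≠ 0 := (Finset.mem_filter.1 hi₀I).2
  have hμ0 : 0 ≤ lam i₀ := lam_nonneg i₀
  -- step 1
  have step1 : RCLike.re ⟪f₀, Smap B f₀⟫ ≤ lam i₀ * RCLike.re ⟪f₀, f₀⟫ := by
    rw [hSf, hpar, Finset.mul_sum]
    refine Finset.sum_le_sum fun i _ => ?_
    by_cases h : c i = 0
    · simp [h]
    · exact mul_le_mul_of_nonneg_right (hmax i (Finset.mem_filter.2 ⟨Finset.mem_univ _, h⟩))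
        (Complex.normSq_nonneg _)
  -- step 2
  have hvE : v i₀ ∈ Module.End.eigenspace (Smap B) ((lam i₀ : ℝ) : ℂ) :=
    (hS.hasEigenvector_eigenvectorBasis hrank i₀).1
  have hne : rho B ((lam i₀ : ℝ) : ℂ) ≠ 1 := by
    intro hρ1
    have hfix : ∀ g : G, Lmap g (v i₀ : EuclideanSpace ℂ G) = (v i₀ : EuclideanSpace ℂ G) := by
      intro g
      have h1 : rho B ((lam i₀ : ℝ) : ℂ) g ⟨v i₀, hvE⟩ = ⟨v i₀, hvE⟩ := by rw [hρ1]; rfl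
      have h2 := congrArg Subtype.val h1
      simpa [rho, LinearMap.restrict_coe_apply] using h2
    have hconst : ∀ g : G, (v i₀ : EuclideanSpace ℂ G) g = (v i₀ : EuclideanSpace ℂ G) 1 := by
      intro g
      have := congrArg (fun f : EuclideanSpace ℂ G => f g) (hfix g)
      simp only [Lmap_apply] at this
      rw [← this]
      exact congrArg _ (by group)
    apply hc₀
    rw [hc]
    calc ⟪v i₀, f₀⟫ = ∑ y, (starRingEnd ℂ) ((v i₀ : EuclideanSpace ℂ G) y) * f₀ y := by
          simp [PiLp.inner_apply, RCLike.inner_apply]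
          exact Finset.sum_congr rfl fun _ _ => mul_comm _ _
      _ = ∑ y, (starRingEnd ℂ) ((v i₀ : EuclideanSpace ℂ G) 1) * f₀ y :=
          Finset.sum_congr rfl fun y _ => by rw [hconst y]
      _ = (starRingEnd ℂ) ((v i₀ : EuclideanSpace ℂ G) 1) * ∑ y, f₀ y := by
          rw [Finset.mul_sum]
      _ = 0 := by rw [hsum, mul_zero]
  have hk : k ≤ Module.finrank ℂ (Module.End.eigenspace (Smap B) ((lam i₀ : ℝ) : ℂ)) :=
    hrep _ (rho B ((lam i₀ : ℝ) : ℂ)) hne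
  set E := Module.End.eigenspace (Smap B) ((lam i₀ : ℝ) : ℂ) with hE
  set d := Module.finrank ℂ E with hd
  set w := stdOrthonormalBasis ℂ E with hw
  have hwo : Orthonormal ℂ (fun j => ((w j : E) : EuclideanSpace ℂ G)) := by
    rw [orthonormal_iff_ite]
    intro i j
    rw [← Submodule.coe_inner]
    exact orthonormal_iff_ite.mp w.orthonormal i j
  have hwE : ∀ j : Fin d, RCLike.re ⟪Tmap B ((w j : E) : EuclideanSpace ℂ G),
      Tmap B ((w j : E) : EuclideanSpace ℂ G)⟫ = lam i₀ := by
    intro j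
    rw [← inner_Smap]
    have hmem : Smap B ((w j : E) : EuclideanSpace ℂ G)
        = ((lam i₀ : ℝ) : ℂ) • ((w j : E) : EuclideanSpace ℂ G) :=
      Module.End.mem_eigenspace_iff.1 (w j).2
    rw [hmem, inner_smul_right, inner_self_eq_norm_sq_to_K]
    have hn1 : ‖((w j : E) : EuclideanSpace ℂ G)‖ = 1 := by
      rw [← Submodule.coe_norm]
      exact w.orthonormal.1 j
    rw [hn1]
    simp
  have each_x : ∀ x : G,
      ∑ j : Fin d, Complex.normSq (Tmap B ((w j : E) : EuclideanSpace ℂ G) x) ≤ (B.card : ℝ) := by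
    intro x
    have hb := hwo.sum_inner_products_le (x := gvec B x) (s := Finset.univ)
    calc ∑ j : Fin d, Complex.normSq (Tmap B ((w j : E) : EuclideanSpace ℂ G) x)
        = ∑ j : Fin d, ‖⟪((w j : E) : EuclideanSpace ℂ G), gvec B x⟫‖ ^ 2 := by
          refine Finset.sum_congr rfl fun j _ => ?_
          rw [← inner_gvec, ← norm_inner_symm]
          rw [Complex.normSq_eq_norm_sq]
      _ ≤ ‖gvec B x‖ ^ 2 := hb
      _ = (B.card : ℝ) := by rw [← inner_self_eq_norm_sq (𝕜 := ℂ)]; exact re_inner_gvec_self B x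
  have step2 : (d : ℝ) * lam i₀ ≤ (Fintype.card G : ℝ) * B.card := by
    have lhs_eq : (d : ℝ) * lam i₀
        = ∑ j : Fin d, ∑ x : G, Complex.normSq (Tmap B ((w j : E) : EuclideanSpace ℂ G) x) := by
      have : ∀ j : Fin d, ∑ x : G, Complex.normSq (Tmap B ((w j : E) : EuclideanSpace ℂ G) x)
          = lam i₀ := fun j => (re_inner_self _).symm.trans (hwE j)
      rw [Finset.sum_congr rfl fun j _ => this j]
      simp [mul_comm]
    calc (d : ℝ) * lam i₀
        = ∑ x : G, ∑ j : Fin d, Complex.normSq (Tmap B ((w j : E) : EuclideanSpace ℂ G) x) := by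
          rw [lhs_eq]; exact Finset.sum_comm
      _ ≤ ∑ _x : G, (B.card : ℝ) := Finset.sum_le_sum fun x _ => each_x x
      _ = (Fintype.card G : ℝ) * B.card := by
          simp [Finset.sum_const, nsmul_eq_mul]
  have hfin : (k : ℝ) * lam i₀ ≤ (Fintype.card G : ℝ) * B.card := by
    calc (k : ℝ) * lam i₀ ≤ (d : ℝ) * lam i₀ :=
          mul_le_mul_of_nonneg_right (by exact_mod_cast hk) hμ0
      _ ≤ _ := step2
  calc (k : ℝ) * RCLike.re ⟪Tmap B f₀, Tmap B f₀⟫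
      = (k : ℝ) * RCLike.re ⟪f₀, Smap B f₀⟫ := by rw [inner_Smap]
    _ ≤ (k : ℝ) * (lam i₀ * RCLike.re ⟪f₀, f₀⟫) :=
        mul_le_mul_of_nonneg_left step1 (Nat.cast_nonneg k)
    _ = ((k : ℝ) * lam i₀) * RCLike.re ⟪f₀, f₀⟫ := by ring
    _ ≤ ((Fintype.card G : ℝ) * B.card) * RCLike.re ⟪f₀, f₀⟫ :=
        mul_le_mul_of_nonneg_right hfin inner_self_nonneg

end GowersAux

open GowersAux



/-- **Gowers' product theorem** (Proposition 0): if every nontrivial complex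
representation of the finite group `G` of order `n` has degree at least `k`, and
`A`, `B`, `C` are subsets with `|A|·|B|·|C| > n³/k`, then `a·b = c` has a solution. -/
theorem statement0 {G : Type} [Group G] [Fintype G] (n k : ℕ)
    (hn : Fintype.card G = n) (hk : 1 ≤ k)
    (hrep : ∀ (V : Type) [AddCommGroup V] [Module ℂ V] [FiniteDimensional ℂ V]
      (ρ : Representation ℂ G V), ρ ≠ 1 → k ≤ Module.finrank ℂ V)
    (A B C : Finset G)
    (hABC : n ^ 3 < k * (A.card * B.card * C.card)) :
    ∃ a ∈ A, ∃ b ∈ B, ∃ c ∈ C, a * b = c := by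
  classical
  by_contra hcon
  push_neg at hcon
  subst hn
  set N : ℝ := (Fintype.card G : ℝ) with hNdef
  have hN0 : 0 < N := by
    rw [hNdef]
    exact_mod_cast Fintype.card_pos (α := G)
  have hA0 : 0 < A.card := Nat.pos_of_ne_zero (fun h => by simp [h] at hABC)
  have hB0 : 0 < B.card := Nat.pos_of_ne_zero (fun h => by simp [h] at hABC)
  have hC0 : 0 < C.card := Nat.pos_of_ne_zero (fun h => by simp [h] at hABC)
  have ha : (0:ℝ) < A.card := by exact_mod_cast hA0
  have hb : (0:ℝ) < B.card := by exact_mod_cast hB0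
  have hc : (0:ℝ) < C.card := by exact_mod_cast hC0
  set F : G → ℝ := fun x => (if x ∈ A then 1 else 0) - A.card / N with hF
  set f₀ : EuclideanSpace ℂ G := WithLp.toLp 2 (fun x => (F x : ℂ)) with hf
  have hFsum : ∑ x, F x = 0 := by
    rw [hF]
    rw [Finset.sum_sub_distrib]
    rw [Finset.sum_boole]
    simp only [Finset.sum_const, Finset.card_univ, nsmul_eq_mul]
    have h1 : (Finset.univ.filter (fun x => x ∈ A)).card = A.card := by
      congr 1
      ext x
      simp
    rw [h1, hNdef]
    field_simp
    simp
  have hsum : ∑ x, f₀ x = 0 := by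
    rw [hf]
    push_cast
    rw [← Complex.ofReal_sum]
    rw [hFsum]
    simp
  -- value of T f₀ on C
  have hTC : ∀ x ∈ C, Tmap B f₀ x = ((-(A.card * B.card / N) : ℝ) : ℂ) := by
    intro x hx
    have hnot : ∀ b ∈ B, x * b⁻¹ ∉ A := by
      intro b hb hmem
      exact hcon _ hmem _ hb _ hx (by group)
    rw [Tmap_apply]
    calc ∑ b ∈ B, f₀ (x * b⁻¹) = ∑ b ∈ B, ((-(A.card / N) : ℝ) : ℂ) := by
          refine Finset.sum_congr rfl fun b hb => ?_
          rw [hf]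
          simp [hF, hnot b hb]
      _ = ((-(A.card * B.card / N) : ℝ) : ℂ) := by
          rw [Finset.sum_const]
          push_cast
          ring
  have lower : (C.card : ℝ) * (A.card * B.card / N)^2 ≤ RCLike.re ⟪Tmap B f₀, Tmap B f₀⟫ := by
    rw [re_inner_self]
    calc (C.card : ℝ) * (A.card * B.card / N)^2
        = ∑ _x ∈ C, (A.card * B.card / N : ℝ)^2 := by rw [Finset.sum_const]; push_cast; ring
      _ = ∑ x ∈ C, Complex.normSq (Tmap B f₀ x) := by
          refine Finset.sum_congr rfl fun x hx => ?_
          rw [hTC x hx, Complex.normSq_ofReal]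
          ring
      _ ≤ ∑ x, Complex.normSq (Tmap B f₀ x) :=
          Finset.sum_le_sum_of_subset_of_nonneg (Finset.subset_univ C)
            (fun x _ _ => Complex.normSq_nonneg _)
  have upper : RCLike.re ⟪f₀, f₀⟫ ≤ (A.card : ℝ) := by
    rw [re_inner_self]
    have h1 : ∀ x, Complex.normSq (f₀ x)
        = (if x ∈ A then (1:ℝ) - 2*(A.card/N) else 0) + (A.card/N)^2 := by
      intro x
      rw [hf]
      rw [Complex.normSq_ofReal]
      by_cases hx : x ∈ A <;> simp [hF, hx] <;> ring
    rw [Finset.sum_congr rfl fun x _ => h1 x, Finset.sum_add_distrib]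
    rw [Finset.sum_ite_mem, Finset.univ_inter, Finset.sum_const, Finset.sum_const,
      Finset.card_univ]
    rw [nsmul_eq_mul, nsmul_eq_mul, ← hNdef]
    have : (A.card:ℝ) * (1 - 2 * (A.card / N)) + N * (A.card / N) ^ 2
        = A.card - A.card^2 / N := by field_simp; ring
    rw [this]
    have : (A.card:ℝ)^2 / N ≥ 0 := by positivity
    linarith
  have hf₀ : f₀ ≠ 0 := by
    intro h
    have h2 := lower
    rw [h, map_zero] at h2
    simp only [inner_zero_left, map_zero] at h2
    have h3 : 0 < (C.card:ℝ) * (A.card * B.card / N)^2 := by positivity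
    linarith
  have keyineq := key k hrep B f₀ hsum hf₀
  -- combine
  have chain : (k:ℝ) * ((C.card : ℝ) * (A.card * B.card / N)^2) ≤ N * B.card * A.card := by
    calc (k:ℝ) * ((C.card : ℝ) * (A.card * B.card / N)^2)
        ≤ (k:ℝ) * RCLike.re ⟪Tmap B f₀, Tmap B f₀⟫ :=
          mul_le_mul_of_nonneg_left lower (Nat.cast_nonneg k)
      _ ≤ N * B.card * RCLike.re ⟪f₀, f₀⟫ := keyineq
      _ ≤ N * B.card * A.card :=
          mul_le_mul_of_nonneg_left upper (by positivity)
  have hcast : N^3 < (k:ℝ) * (A.card * B.card * C.card) := by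
    rw [hNdef]
    exact_mod_cast hABC
  have h2 : (k:ℝ) * ((C.card : ℝ) * (A.card * B.card / N)^2) * N^2
      ≤ N * B.card * A.card * N^2 :=
    mul_le_mul_of_nonneg_right chain (by positivity)
  have h3 : (k:ℝ) * ((C.card : ℝ) * (A.card * B.card / N)^2) * N^2
      = (k:ℝ) * C.card * (A.card * B.card)^2 := by
    field_simp
  rw [h3] at h2
  nlinarith [mul_lt_mul_of_pos_right hcast (mul_pos hb ha), mul_pos hb ha, hN0]
end

section
/- For every n ≥ 2 there is a constant C = C(n) such that for every finite field F of cardinality q, the number of elements of SL(n, F) that are not regular semisimple is at most (C/q)·|SL(n, F)|; equivalently, the number of regular semisimple elements of SL(n, F) is at least (1 − C/q)·|SL(n, F)|. -/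
open Finset Polynomial Matrix

namespace SZ


variable {F : Type*} [Field F] [Fintype F] [DecidableEq F]

theorem sz_fin : ∀ (N : ℕ) (P : MvPolynomial (Fin N) F), P ≠ 0 →
    (univ.filter (fun v : Fin N → F => MvPolynomial.eval v P = 0)).card * Fintype.card F
      ≤ P.totalDegree * (Fintype.card F) ^ N := by
  intro N
  induction N with
  | zero =>
    intro P hP
    have : (univ.filter (fun v : Fin 0 → F => MvPolynomial.eval v P = 0)) = ∅ := by
      refine Finset.filter_eq_empty_iff.mpr ?_
      intro v _
      rw [MvPolynomial.eq_C_of_isEmpty P, MvPolynomial.eval_C]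
      intro h
      exact hP (by rw [MvPolynomial.eq_C_of_isEmpty P, h, map_zero])
    rw [this]
    simp
  | succ N ih =>
    intro P hP
    set Q := MvPolynomial.finSuccEquiv F N P with hQdef
    have hQ : Q ≠ 0 := by
      rw [hQdef]
      exact (map_ne_zero_iff (MvPolynomial.finSuccEquiv F N)
        (AlgEquiv.injective _)).mpr hP
    set k := Q.natDegree with hk
    set Pk := Q.coeff k with hPkdef
    have hPk : Pk ≠ 0 := Polynomial.leadingCoeff_ne_zero.mpr hQ
    -- fiberwise decomposition
    have hsplit : (univ.filter (fun v : Fin (N+1) → F => MvPolynomial.eval v P = 0)).card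
        = ∑ s : Fin N → F,
            (univ.filter (fun y : F => MvPolynomial.eval (Fin.cons y s) P = 0)).card := by
      rw [Finset.card_eq_sum_card_fiberwise
        (f := fun v : Fin (N+1) → F => Fin.tail v) (t := univ) (fun _ _ => mem_univ _)]
      refine Finset.sum_congr rfl fun s _ => ?_
      refine Finset.card_bij' (fun v _ => v 0) (fun y _ => Fin.cons y s) ?_ ?_ ?_ ?_
      · intro v hv
        simp only [mem_filter, mem_univ, true_and] at hv ⊢
        rw [← hv.2, Fin.cons_self_tail]
        exact hv.1
      · intro y hy
        simp only [mem_filter, mem_univ, true_and] at hy ⊢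
        exact ⟨hy, Fin.tail_cons _ _⟩
      · intro v hv
        simp only [mem_filter, mem_univ, true_and] at hv
        obtain ⟨h1, h2⟩ := hv
        subst h2
        exact Fin.cons_self_tail v
      · intro y hy
        simp
    -- pointwise bounds
    have hbound_all : ∀ s : Fin N → F,
        (univ.filter (fun y : F => MvPolynomial.eval (Fin.cons y s) P = 0)).card
          ≤ Fintype.card F := fun s =>
      (Finset.card_filter_le _ _).trans (by simp)
    have hbound_good : ∀ s : Fin N → F, MvPolynomial.eval s Pk ≠ 0 →
        (univ.filter (fun y : F => MvPolynomial.eval (Fin.cons y s) P = 0)).card ≤ k := by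
      intro s hs
      set qs := Q.map (MvPolynomial.eval s) with hqs
      have hqs0 : qs ≠ 0 := fun h => hs (by
        have := Polynomial.coeff_map (MvPolynomial.eval s) k (p := Q)
        rw [← hqs, h] at this
        simpa [hPkdef] using this.symm)
      have hsub : (univ.filter (fun y : F => MvPolynomial.eval (Fin.cons y s) P = 0))
          ⊆ qs.roots.toFinset := by
        intro y hy
        simp only [mem_filter, mem_univ, true_and] at hy
        rw [MvPolynomial.eval_eq_eval_mv_eval'] at hy
        rw [Multiset.mem_toFinset, Polynomial.mem_roots hqs0]
        exact hy
      refine (Finset.card_le_card hsub).trans ?_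
      refine (Multiset.toFinset_card_le _).trans ?_
      refine (Polynomial.card_roots' qs).trans ?_
      exact Polynomial.natDegree_map_le
    -- split sum
    rw [hsplit]
    rw [← Finset.sum_filter_add_sum_filter_not univ (fun s => MvPolynomial.eval s Pk = 0)]
    have h1 : (∑ s ∈ univ.filter (fun s : Fin N → F => MvPolynomial.eval s Pk = 0),
        (univ.filter (fun y : F => MvPolynomial.eval (Fin.cons y s) P = 0)).card)
        ≤ Pk.totalDegree * (Fintype.card F) ^ N := by
      calc _ ≤ ∑ _s ∈ univ.filter (fun s : Fin N → F => MvPolynomial.eval s Pk = 0),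
            Fintype.card F := Finset.sum_le_sum (fun s _ => hbound_all s)
        _ = (univ.filter (fun s : Fin N → F => MvPolynomial.eval s Pk = 0)).card
              * Fintype.card F := by rw [Finset.sum_const, smul_eq_mul]
        _ ≤ _ := ih Pk hPk
    have h2 : (∑ s ∈ univ.filter (fun s : Fin N → F => ¬ MvPolynomial.eval s Pk = 0),
        (univ.filter (fun y : F => MvPolynomial.eval (Fin.cons y s) P = 0)).card)
        ≤ (Fintype.card F) ^ N * k := by
      calc _ ≤ ∑ _s ∈ univ.filter (fun s : Fin N → F => ¬ MvPolynomial.eval s Pk = 0),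
            k := Finset.sum_le_sum (fun s hs => hbound_good s (by simpa using (mem_filter.mp hs).2))
        _ = (univ.filter (fun s : Fin N → F => ¬ MvPolynomial.eval s Pk = 0)).card * k := by
            rw [Finset.sum_const, smul_eq_mul]
        _ ≤ (Fintype.card F) ^ N * k := by
            refine Nat.mul_le_mul_right _ ?_
            refine (Finset.card_filter_le _ _).trans ?_
            simp [Fintype.card_fun]
    have hdeg : Pk.totalDegree + k ≤ P.totalDegree :=
      MvPolynomial.totalDegree_coeff_finSuccEquiv_add_le P k hPk
    calc (_ + _) * Fintype.card F
        ≤ (Pk.totalDegree * (Fintype.card F) ^ N + (Fintype.card F) ^ N * k) * Fintype.card F := by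
          exact Nat.mul_le_mul_right _ (Nat.add_le_add h1 h2)
      _ = (Pk.totalDegree + k) * (Fintype.card F) ^ (N + 1) := by ring
      _ ≤ P.totalDegree * (Fintype.card F) ^ (N + 1) := Nat.mul_le_mul_right _ hdeg

theorem sz {σ : Type*} [Fintype σ] [DecidableEq σ] (P : MvPolynomial σ F) (hP : P ≠ 0) :
    (univ.filter (fun v : σ → F => MvPolynomial.eval v P = 0)).card * Fintype.card F
      ≤ P.totalDegree * (Fintype.card F) ^ (Fintype.card σ) := by
  set e := Fintype.equivFin σ
  set P' := MvPolynomial.rename e P with hP'def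
  have hP' : P' ≠ 0 := fun h => hP ((MvPolynomial.rename_injective _ e.injective)
    (by simpa [hP'def] using h))
  have hcard : (univ.filter (fun v : σ → F => MvPolynomial.eval v P = 0)).card
      = (univ.filter (fun v : Fin (Fintype.card σ) → F => MvPolynomial.eval v P' = 0)).card := by
    refine Finset.card_bij' (fun w _ => w ∘ e.symm) (fun v _ => v ∘ e) ?_ ?_ ?_ ?_
    · intro w hw
      simp only [mem_filter, mem_univ, true_and] at hw ⊢
      rw [hP'def, MvPolynomial.eval_rename]
      have : (w ∘ e.symm) ∘ e = w := by ext i; simp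
      rw [this]; exact hw
    · intro v hv
      simp only [mem_filter, mem_univ, true_and] at hv ⊢
      rw [hP'def, MvPolynomial.eval_rename] at hv
      exact hv
    · intro w _; ext i; simp
    · intro v _; ext i; simp
  rw [hcard]
  refine (sz_fin _ P' hP').trans ?_
  exact Nat.mul_le_mul_right _ (MvPolynomial.totalDegree_rename_le _ _)



/-- Row/column index encoding for the Sylvester matrix. -/
def enc (m : ℕ) : (Fin m ⊕ Fin (m+1)) → ℕ := Sum.elim (fun i => (i : ℕ)) (fun j => m + (j : ℕ))

lemma enc_lt {m : ℕ} (r : Fin m ⊕ Fin (m+1)) : enc m r ≤ 2 * m := by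
  rcases r with i | j
  · simp only [enc, Sum.elim_inl]; omega
  · simp only [enc, Sum.elim_inr]; omega

lemma enc_surj {m : ℕ} {k : ℕ} (hk : k ≤ 2 * m) : ∃ r, enc m r = k := by
  by_cases h : k < m
  · exact ⟨Sum.inl ⟨k, h⟩, rfl⟩
  · refine ⟨Sum.inr ⟨k - m, by omega⟩, ?_⟩
    simp only [enc, Sum.elim_inr]
    omega

variable {R : Type*} [CommRing R]

/-- Sylvester-type matrix of `p` and its derivative. -/
noncomputable def sylv (m : ℕ) (p : R[X]) : Matrix (Fin m ⊕ Fin (m+1)) (Fin m ⊕ Fin (m+1)) R :=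
  fun r c => Sum.elim (fun j : Fin m => (X ^ (j:ℕ) * p).coeff (enc m r))
    (fun j : Fin (m+1) => (X ^ (j:ℕ) * derivative p).coeff (enc m r)) c

lemma coeff_sum_C_mul_X_pow {t : ℕ} (c : Fin t → R) (j : Fin t) :
    (∑ i : Fin t, C (c i) * X ^ (i:ℕ)).coeff (j:ℕ) = c j := by
  rw [Polynomial.finset_sum_coeff]
  rw [Finset.sum_eq_single j]
  · simp [Polynomial.coeff_C_mul, Polynomial.coeff_X_pow]
  · intro i _ hij
    have : (j:ℕ) ≠ (i:ℕ) := fun h => hij (Fin.ext h.symm)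
    simp [Polynomial.coeff_C_mul, Polynomial.coeff_X_pow, this]
  · simp

lemma sylv_mulVec {m : ℕ} (p : R[X]) (v : (Fin m ⊕ Fin (m+1)) → R)
    (r : Fin m ⊕ Fin (m+1)) :
    (sylv m p).mulVec v r =
      ((∑ j : Fin m, C (v (Sum.inl j)) * X ^ (j:ℕ)) * p
        + (∑ j : Fin (m+1), C (v (Sum.inr j)) * X ^ (j:ℕ)) * derivative p).coeff (enc m r) := by
  rw [Polynomial.coeff_add]
  rw [Finset.sum_mul, Finset.sum_mul, Polynomial.finset_sum_coeff, Polynomial.finset_sum_coeff]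
  rw [Matrix.mulVec, dotProduct, Fintype.sum_sum_type]
  congr 1
  · refine Finset.sum_congr rfl fun j _ => ?_
    rw [mul_assoc, Polynomial.coeff_C_mul]
    simp [sylv, mul_comm]
  · refine Finset.sum_congr rfl fun j _ => ?_
    rw [mul_assoc, Polynomial.coeff_C_mul]
    simp [sylv, mul_comm]

variable {K : Type*} [Field K] [DecidableEq K]

lemma natDegree_sum_C_mul_X_pow_lt {t : ℕ} (ht : 1 ≤ t) (c : Fin t → K) :
    (∑ i : Fin t, C (c i) * X ^ (i:ℕ) : K[X]).natDegree < t := by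
  have : (∑ i : Fin t, C (c i) * X ^ (i:ℕ) : K[X]).natDegree ≤ t - 1 := by
    refine Polynomial.natDegree_sum_le_of_forall_le _ _ (fun i _ => ?_)
    refine (Polynomial.natDegree_mul_le).trans ?_
    simp only [Polynomial.natDegree_C, Polynomial.natDegree_X_pow, zero_add]
    omega
  omega



theorem det_sylv_eq_zero_iff {m : ℕ} (hm : 1 ≤ m) {p : K[X]}
    (hdeg : p.natDegree = m + 1) (hp0 : p ≠ 0) :
    (sylv m p).det = 0 ↔ ¬ IsCoprime p (derivative p) := by
  have hq : (derivative p).natDegree ≤ m := by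
    have := Polynomial.natDegree_derivative_le p
    omega
  constructor
  · -- det = 0 → not coprime
    intro hdet hcop
    obtain ⟨v, hv0, hmv⟩ := (Matrix.exists_mulVec_eq_zero_iff).mpr hdet
    set A := ∑ j : Fin m, C (v (Sum.inl j)) * X ^ (j:ℕ) with hA
    set B := ∑ j : Fin (m+1), C (v (Sum.inr j)) * X ^ (j:ℕ) with hB
    have hdA : A.natDegree < m := natDegree_sum_C_mul_X_pow_lt hm _
    have hdB : B.natDegree < m + 1 := natDegree_sum_C_mul_X_pow_lt (by omega) _
    have hrel : A * p + B * derivative p = 0 := by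
      ext k
      rw [Polynomial.coeff_zero]
      by_cases hk : k ≤ 2 * m
      · obtain ⟨r, hr⟩ := enc_surj hk
        have := congrFun hmv r
        rw [sylv_mulVec] at this
        rw [← hA, ← hB] at this
        rw [← hr]
        simpa using this
      · refine Polynomial.coeff_eq_zero_of_natDegree_lt ?_
        refine lt_of_le_of_lt (Polynomial.natDegree_add_le _ _) ?_
        have h1 : (A * p).natDegree ≤ 2 * m := by
          refine Polynomial.natDegree_mul_le.trans ?_
          omega
        have h2 : (B * derivative p).natDegree ≤ 2 * m := by
          refine Polynomial.natDegree_mul_le.trans ?_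
          omega
        omega
    -- coprime gives contradiction
    by_cases hB0 : B = 0
    · rw [hB0, zero_mul, add_zero, mul_eq_zero] at hrel
      rcases hrel with hA0 | hp
      · -- then v = 0
        apply hv0
        funext r
        simp only [Pi.zero_apply]
        rcases r with j | j
        · have := coeff_sum_C_mul_X_pow (fun j : Fin m => v (Sum.inl j)) j
          rw [← hA] at this
          rw [← this, hA0, Polynomial.coeff_zero]
        · have := coeff_sum_C_mul_X_pow (fun j : Fin (m+1) => v (Sum.inr j)) j
          rw [← hB] at this
          rw [← this, hB0, Polynomial.coeff_zero]
      · exact hp0 hp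
    · have hdvd : p ∣ B * derivative p := ⟨-A, by linear_combination hrel⟩
      have hpB : p ∣ B := hcop.dvd_of_dvd_mul_right hdvd
      have := Polynomial.natDegree_le_of_dvd hpB hB0
      omega
  · -- not coprime → det = 0
    intro hncop
    rw [← Matrix.exists_mulVec_eq_zero_iff]
    -- construct A, B
    obtain ⟨A, B, hdA, hdB, hBne, hrel⟩ :
        ∃ A B : K[X], A.natDegree < m ∧ B.natDegree < m + 1 ∧ B ≠ 0 ∧
          A * p + B * derivative p = 0 := by
      by_cases hq0 : derivative p = 0
      · exact ⟨0, 1, by simp; omega, by simp, one_ne_zero, by simp [hq0]⟩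
      · obtain ⟨g, hgp, hgq, hgu⟩ : ∃ g : K[X], g ∣ p ∧ g ∣ derivative p ∧ ¬ IsUnit g :=
          ⟨EuclideanDomain.gcd p (derivative p), EuclideanDomain.gcd_dvd_left _ _,
            EuclideanDomain.gcd_dvd_right _ _,
            fun h => hncop (EuclideanDomain.gcd_isUnit_iff.mp h)⟩
        obtain ⟨p₁, hp₁⟩ := hgp
        obtain ⟨q₁, hq₁⟩ := hgq
        have hg0 : g ≠ 0 := fun h => hp0 (by rw [hp₁, h, zero_mul])
        have hp₁0 : p₁ ≠ 0 := fun h => hp0 (by rw [hp₁, h, mul_zero])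
        have hq₁0 : q₁ ≠ 0 := fun h => hq0 (by rw [hq₁, h, mul_zero])
        have hgd : 1 ≤ g.natDegree := by
          by_contra h
          push_neg at h
          exact hgu (Polynomial.isUnit_iff_degree_eq_zero.mpr
            (by rw [Polynomial.degree_eq_natDegree hg0]; simp; omega))
        have e1 : p.natDegree = g.natDegree + p₁.natDegree := by
          rw [hp₁, Polynomial.natDegree_mul hg0 hp₁0]
        have e2 : (derivative p).natDegree = g.natDegree + q₁.natDegree := by
          rw [hq₁, Polynomial.natDegree_mul hg0 hq₁0]
        refine ⟨-q₁, p₁, ?_, ?_, hp₁0, ?_⟩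
        · rw [Polynomial.natDegree_neg]; omega
        · omega
        · rw [hq₁, hp₁]; ring
    refine ⟨Sum.elim (fun j : Fin m => A.coeff (j:ℕ)) (fun j : Fin (m+1) => B.coeff (j:ℕ)),
      ?_, ?_⟩
    · intro h
      have : B.coeff B.natDegree = 0 := by
        have := congrFun h (Sum.inr ⟨B.natDegree, hdB⟩)
        simpa using this
      exact hBne (Polynomial.leadingCoeff_eq_zero.mp this)
    · funext r
      rw [sylv_mulVec]
      have eA : (∑ j : Fin m, C ((Sum.elim (fun j : Fin m => A.coeff (j:ℕ))
          (fun j : Fin (m+1) => B.coeff (j:ℕ))) (Sum.inl j)) * X ^ (j:ℕ)) = A := by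
        simp only [Sum.elim_inl]
        rw [Fin.sum_univ_eq_sum_range (fun i => C (A.coeff i) * X ^ i)]
        simp_rw [Polynomial.C_mul_X_pow_eq_monomial]
        exact (Polynomial.as_sum_range' A m hdA).symm
      have eB : (∑ j : Fin (m+1), C ((Sum.elim (fun j : Fin m => A.coeff (j:ℕ))
          (fun j : Fin (m+1) => B.coeff (j:ℕ))) (Sum.inr j)) * X ^ (j:ℕ)) = B := by
        simp only [Sum.elim_inr]
        rw [Fin.sum_univ_eq_sum_range (fun i => C (B.coeff i) * X ^ i)]
        simp_rw [Polynomial.C_mul_X_pow_eq_monomial]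
        exact (Polynomial.as_sum_range' B (m+1) hdB).symm
      rw [eA, eB, hrel]
      simp



variable {R : Type*} [CommRing R] {σ : Type*}

/-- All coefficients of a univariate polynomial over a multivariate polynomial ring have total
degree at most `c`. -/
def CoeffsLE (c : ℕ) (P : (MvPolynomial σ R)[X]) : Prop :=
  ∀ k, (P.coeff k).totalDegree ≤ c

lemma CoeffsLE.mul {a b : ℕ} {P Q : (MvPolynomial σ R)[X]} (hP : CoeffsLE a P)
    (hQ : CoeffsLE b Q) : CoeffsLE (a + b) (P * Q) := by
  intro k
  rw [Polynomial.coeff_mul]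
  refine (MvPolynomial.totalDegree_finset_sum _ _).trans (Finset.sup_le ?_)
  rintro ⟨i, j⟩ _
  exact (MvPolynomial.totalDegree_mul _ _).trans (add_le_add (hP i) (hQ j))

lemma CoeffsLE.one : CoeffsLE (σ := σ) (R := R) 0 1 := by
  intro k
  rcases eq_or_ne k 0 with rfl | hk
  · simp
  · simp [Polynomial.coeff_one, hk]

lemma CoeffsLE.prod {ι : Type*} (s : Finset ι) (f : ι → (MvPolynomial σ R)[X])
    (h : ∀ i ∈ s, CoeffsLE 1 (f i)) : CoeffsLE s.card (∏ i ∈ s, f i) := by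
  induction s using Finset.cons_induction with
  | empty => simpa using CoeffsLE.one
  | cons i s his ih =>
    rw [Finset.prod_cons, Finset.card_cons]
    have := (h i (Finset.mem_cons_self i s)).mul (ih (fun j hj => h j (Finset.mem_cons.mpr (Or.inr hj))))
    simpa [add_comm] using this

lemma CoeffsLE.neg {a : ℕ} {P : (MvPolynomial σ R)[X]} (hP : CoeffsLE a P) :
    CoeffsLE a (-P) := by
  intro k
  rw [Polynomial.coeff_neg, MvPolynomial.totalDegree_neg]
  exact hP k

lemma CoeffsLE.sum {ι : Type*} {a : ℕ} (s : Finset ι) (f : ι → (MvPolynomial σ R)[X])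
    (h : ∀ i ∈ s, CoeffsLE a (f i)) : CoeffsLE a (∑ i ∈ s, f i) := by
  intro k
  rw [Polynomial.finset_sum_coeff]
  exact (MvPolynomial.totalDegree_finset_sum _ _).trans (Finset.sup_le (fun i hi => h i hi k))

/-- coefficients of the characteristic polynomial of a matrix of variables-like entries. -/
lemma coeffsLE_charpoly {n : Type*} [Fintype n] [DecidableEq n]
    (M : Matrix n n (MvPolynomial σ R)) (h : ∀ i j, (M i j).totalDegree ≤ 1) :
    CoeffsLE (Fintype.card n) M.charpoly := by
  have hentry : ∀ i j, CoeffsLE 1 (charmatrix M i j) := by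
    intro i j k
    rcases eq_or_ne i j with rfl | hij
    · rw [charmatrix_apply_eq, Polynomial.coeff_sub]
      refine (MvPolynomial.totalDegree_sub _ _).trans (max_le ?_ ?_)
      · rcases eq_or_ne k 1 with rfl | hk
        · simp
        · simp [Polynomial.coeff_X, Ne.symm hk]
      · rcases eq_or_ne k 0 with rfl | hk
        · simpa using h i i
        · simp [Polynomial.coeff_C, hk]
    · rw [charmatrix_apply_ne _ _ _ hij]
      rw [Polynomial.coeff_neg, MvPolynomial.totalDegree_neg]
      rcases eq_or_ne k 0 with rfl | hk
      · simpa using h i j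
      · simp [Polynomial.coeff_C, hk]
  rw [Matrix.charpoly, Matrix.det_apply]
  refine CoeffsLE.sum _ _ (fun τ _ => ?_)
  have hprod : CoeffsLE (Fintype.card n) (∏ i, charmatrix M (τ i) i) := by
    simpa using CoeffsLE.prod Finset.univ (fun i => charmatrix M (τ i) i)
      (fun i _ => hentry (τ i) i)
  rcases Int.units_eq_one_or (Equiv.Perm.sign τ) with hs | hs
  · rw [hs, one_smul]; exact hprod
  · rw [hs]
    intro k
    rw [Units.smul_def]
    have : ((-1 : ℤˣ) : ℤ) • (∏ i, charmatrix M (τ i) i) = -(∏ i, charmatrix M (τ i) i) := by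
      simp
    rw [this]
    exact hprod.neg k

lemma totalDegree_det_le {ι : Type*} [Fintype ι] [DecidableEq ι] {c : ℕ}
    (N : Matrix ι ι (MvPolynomial σ R)) (h : ∀ i j, (N i j).totalDegree ≤ c) :
    N.det.totalDegree ≤ Fintype.card ι * c := by
  rw [Matrix.det_apply]
  refine (MvPolynomial.totalDegree_finset_sum _ _).trans (Finset.sup_le (fun τ _ => ?_))
  have hprod : (∏ i, N (τ i) i).totalDegree ≤ Fintype.card ι * c := by
    refine (MvPolynomial.totalDegree_finset_prod _ _).trans ?_
    calc ∑ i, (N (τ i) i).totalDegree ≤ ∑ _i : ι, c := Finset.sum_le_sum (fun i _ => h _ _)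
      _ = Fintype.card ι * c := by simp [mul_comm]
  rcases Int.units_eq_one_or (Equiv.Perm.sign τ) with hs | hs
  · rw [hs, one_smul]; exact hprod
  · rw [hs, Units.smul_def]
    have : ((-1 : ℤˣ) : ℤ) • (∏ i, N (τ i) i) = -(∏ i, N (τ i) i) := by simp
    rw [this, MvPolynomial.totalDegree_neg]
    exact hprod



variable (R : Type*) [CommRing R]

lemma totalDegree_X_le' {τ : Type*} (s : τ) :
    (MvPolynomial.X s : MvPolynomial τ R).totalDegree ≤ 1 := by
  rw [MvPolynomial.X]
  exact (MvPolynomial.totalDegree_monomial_le _ _).trans (by simp)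

/-- The generic `n × n` matrix with polynomial variable entries. -/
noncomputable def genM (n : ℕ) : Matrix (Fin n) (Fin n) (MvPolynomial (Fin n × Fin n) R) :=
  Matrix.of fun i j => MvPolynomial.X (i, j)

/-- The generic "discriminant" polynomial. -/
noncomputable def Dpoly (n m : ℕ) : MvPolynomial (Fin n × Fin n) R :=
  (sylv m (genM R n).charpoly).det

variable {R}

lemma map_genM {S : Type*} [CommRing S] (n : ℕ) (f : MvPolynomial (Fin n × Fin n) R →+* S)
    (g : Matrix (Fin n) (Fin n) S) (hf : ∀ i j, f (MvPolynomial.X (i, j)) = g i j) :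
    (genM R n).map f = g := by
  ext i j
  simp [genM, hf]

lemma map_sylv {S : Type*} [CommRing S] (m : ℕ) (p : R[X]) (f : R →+* S) :
    (sylv m p).map f = sylv m (p.map f) := by
  ext r c
  rcases c with j | j
  · simp only [Matrix.map_apply, sylv, Sum.elim_inl]
    rw [← Polynomial.coeff_map, Polynomial.map_mul, Polynomial.map_pow, Polynomial.map_X]
  · simp only [Matrix.map_apply, sylv, Sum.elim_inr]
    rw [← Polynomial.coeff_map, Polynomial.map_mul, Polynomial.map_pow, Polynomial.map_X,
      Polynomial.derivative_map]

lemma eval_Dpoly {F : Type*} [Field F] (n m : ℕ) (g : Matrix (Fin n) (Fin n) F) :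
    MvPolynomial.eval (fun ij : Fin n × Fin n => g ij.1 ij.2) (Dpoly F n m)
      = (sylv m g.charpoly).det := by
  rw [Dpoly, RingHom.map_det, RingHom.mapMatrix_apply, map_sylv, ← Matrix.charpoly_map, map_genM]
  intro i j
  simp

lemma eval_det_genM {F : Type*} [Field F] (n : ℕ) (g : Matrix (Fin n) (Fin n) F) :
    MvPolynomial.eval (fun ij : Fin n × Fin n => g ij.1 ij.2) (genM F n).det = g.det := by
  rw [RingHom.map_det, RingHom.mapMatrix_apply, map_genM]
  intro i j
  simp

lemma totalDegree_Dpoly_le (n m : ℕ) : (Dpoly R n m).totalDegree ≤ (m + (m + 1)) * n := by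
  have hcp : CoeffsLE (Fintype.card (Fin n)) (genM R n).charpoly :=
    coeffsLE_charpoly _ (fun i j => by simpa [genM] using totalDegree_X_le' (R := R) (i, j))
  rw [Fintype.card_fin] at hcp
  have hder : CoeffsLE n (derivative (genM R n).charpoly) := by
    intro k
    rw [Polynomial.coeff_derivative]
    refine (MvPolynomial.totalDegree_mul _ _).trans ?_
    have h2 : ((k : MvPolynomial (Fin n × Fin n) R) + 1).totalDegree = 0 := by
      rw [← Nat.cast_one (R := MvPolynomial (Fin n × Fin n) R), ← Nat.cast_add,
        ← map_natCast (MvPolynomial.C : R →+* MvPolynomial (Fin n × Fin n) R)]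
      exact MvPolynomial.totalDegree_C _
    rw [h2, add_zero]
    exact hcp _
  have := totalDegree_det_le (sylv m (genM R n).charpoly) (c := n) ?_
  · simpa [Dpoly] using this
  · intro r c
    rcases c with j | j
    · show ((X ^ (j:ℕ) * (genM R n).charpoly).coeff (enc m r)).totalDegree ≤ n
      rw [Polynomial.X_pow_mul, Polynomial.coeff_mul_X_pow']
      split
      · exact hcp _
      · simp
    · show ((X ^ (j:ℕ) * derivative (genM R n).charpoly).coeff (enc m r)).totalDegree ≤ n
      rw [Polynomial.X_pow_mul, Polynomial.coeff_mul_X_pow']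
      split
      · exact hder _
      · simp

lemma totalDegree_det_genM_le (n : ℕ) : (genM R n).det.totalDegree ≤ n := by
  have := totalDegree_det_le (genM R n) (c := 1)
    (fun i j => by simpa [genM] using totalDegree_X_le' (R := R) (i, j))
  simpa using this



variable {F : Type} [Field F]

/-- A monic separable polynomial of degree `n` over any field. -/
lemma exists_separable_monic (n : ℕ) (hn : 2 ≤ n) :
    ∃ h : F[X], h.Monic ∧ h.natDegree = n ∧ IsCoprime h (derivative h) := by
  by_cases hc : (n : F) = 0
  · refine ⟨X ^ n - X, ?_, ?_, ?_⟩
    · refine Polynomial.monic_X_pow_sub ?_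
      rw [Polynomial.degree_X]
      exact_mod_cast (by omega : 1 < n)
    · rw [Polynomial.natDegree_sub_eq_left_of_natDegree_lt] <;>
        simp [Polynomial.natDegree_X_pow, Polynomial.natDegree_X] <;> omega
    · have hd : derivative (X ^ n - X : F[X]) = -1 := by
        rw [Polynomial.derivative_sub, Polynomial.derivative_X_pow, Polynomial.derivative_X, hc]
        simp
      rw [hd]
      exact ⟨0, -1, by ring⟩
  · refine ⟨X ^ n - 1, ?_, ?_, ?_⟩
    · refine Polynomial.monic_X_pow_sub ?_
      rw [Polynomial.degree_one]
      exact_mod_cast (by omega : 0 < n)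
    · rw [Polynomial.natDegree_sub_eq_left_of_natDegree_lt] <;>
        simp [Polynomial.natDegree_X_pow, Polynomial.natDegree_one] <;> omega
    · have hd : derivative (X ^ n - 1 : F[X]) = C (n : F) * X ^ (n - 1) := by
        rw [Polynomial.derivative_sub, Polynomial.derivative_X_pow, Polynomial.derivative_one]
        simp
      rw [hd]
      refine ⟨-1, C (n : F)⁻¹ * X, ?_⟩
      have hX : (X : F[X]) * X ^ (n - 1) = X ^ n := by
        rw [← pow_succ']
        congr 1
        omega
      calc -1 * (X ^ n - 1) + C (n:F)⁻¹ * X * (C (n:F) * X ^ (n-1))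
          = -(X ^ n) + 1 + (C (n:F)⁻¹ * C (n:F)) * (X * X ^ (n - 1)) := by ring
        _ = 1 := by
            rw [hX, ← Polynomial.C_mul, inv_mul_cancel₀ hc]
            simp

/-- A matrix over `F` whose characteristic polynomial is separable. -/
lemma exists_matrix_separable_charpoly (n : ℕ) (hn : 2 ≤ n) :
    ∃ g : Matrix (Fin n) (Fin n) F, IsCoprime g.charpoly (derivative g.charpoly) := by
  obtain ⟨h, hmonic, hdeg, hcop⟩ := exists_separable_monic (F := F) n hn
  have h0 : h ≠ 0 := hmonic.ne_zero
  let pb := AdjoinRoot.powerBasis h0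
  have hdim : pb.dim = n := by simp [pb, AdjoinRoot.powerBasis, hdeg]
  let M := Algebra.leftMulMatrix pb.basis pb.gen
  have hcp : M.charpoly = h := by
    rw [charpoly_leftMulMatrix]
    exact AdjoinRoot.minpoly_powerBasis_gen_of_monic hmonic
  refine ⟨Matrix.reindex (finCongr hdim) (finCongr hdim) M, ?_⟩
  rw [Matrix.charpoly_reindex, hcp]
  exact hcop



variable {F : Type} [Field F]

lemma charpoly_smul {n : ℕ} (g : Matrix (Fin n) (Fin n) F) (u : Fˣ) :
    ((u : F) • g).charpoly
      = C ((u : F) ^ n) * Polynomial.aeval (C ((u : F)⁻¹) * X) g.charpoly := by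
  set φ := Polynomial.aeval (R := F) (C ((u : F)⁻¹) * (X : F[X])) with hφ
  have hmap : charmatrix ((u : F) • g) = (C (u : F)) • (charmatrix g).map φ := by
    refine Matrix.ext fun i j => ?_
    rcases eq_or_ne i j with rfl | hij
    · rw [charmatrix_apply_eq]
      simp only [Matrix.smul_apply, Matrix.map_apply, charmatrix_apply_eq]
      rw [map_sub, hφ]
      simp only [Polynomial.aeval_X, Polynomial.aeval_C, Polynomial.algebraMap_eq,
        smul_eq_mul]
      rw [mul_sub, ← mul_assoc, ← Polynomial.C_mul,
        mul_inv_cancel₀ (Units.ne_zero u), Polynomial.C_1, one_mul, ← Polynomial.C_mul]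
    · rw [charmatrix_apply_ne _ _ _ hij]
      simp only [Matrix.smul_apply, Matrix.map_apply, charmatrix_apply_ne _ _ _ hij]
      rw [map_neg, hφ, Polynomial.aeval_C, Polynomial.algebraMap_eq]
      simp only [smul_eq_mul]
      rw [mul_neg, ← Polynomial.C_mul]
  rw [Matrix.charpoly, hmap, Matrix.det_smul, Fintype.card_fin, ← Polynomial.C_pow]
  congr 1
  have hM : (charmatrix g).map ⇑φ = ((φ : F[X] →+* F[X]).mapMatrix (charmatrix g)) := rfl
  rw [hM, ← RingHom.map_det]
  rfl

lemma not_squarefree_charpoly_smul {n : ℕ} (hn : 1 ≤ n) (g : Matrix (Fin n) (Fin n) F)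
    (u : Fˣ) (hg : ¬ Squarefree g.charpoly) : ¬ Squarefree ((u : F) • g).charpoly := by
  rw [Squarefree] at hg
  push_neg at hg
  obtain ⟨x, hxdvd, hxu⟩ := hg
  intro hsf
  set φ := Polynomial.aeval (R := F) (C ((u : F)⁻¹) * (X : F[X])) with hφ
  have hdvd : φ x * φ x ∣ ((u : F) • g).charpoly := by
    rw [charpoly_smul g u]
    refine Dvd.dvd.mul_left ?_ _
    rw [← _root_.map_mul]
    exact _root_.map_dvd (Polynomial.aeval (R := F) (C ((u : F)⁻¹) * (X : F[X]))) hxdvd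
  have hux := hsf _ hdvd
  apply hxu
  -- transfer unit along φ
  have hx0 : x ≠ 0 := by
    intro h
    rw [h, map_zero] at hux
    exact (not_isUnit_zero hux)
  have hcomp : φ x = x.comp (C ((u : F)⁻¹) * X) := by
    rw [hφ, Polynomial.aeval_def, Polynomial.comp, Polynomial.algebraMap_eq]
  have hdeg : x.natDegree = 0 := by
    have h1 : (φ x).natDegree = 0 := Polynomial.natDegree_eq_zero_of_isUnit hux
    rw [hcomp, Polynomial.natDegree_comp] at h1
    have : (C ((u : F)⁻¹) * X).natDegree = 1 := by
      rw [Polynomial.natDegree_C_mul (by simp [Units.ne_zero])]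
      exact Polynomial.natDegree_X
    rw [this, mul_one] at h1
    exact h1
  obtain ⟨c, rfl⟩ := Polynomial.natDegree_eq_zero.mp hdeg
  refine Polynomial.isUnit_C.mpr (isUnit_iff_ne_zero.mpr ?_)
  intro h
  rw [h, Polynomial.C_0] at hx0
  exact hx0 rfl


end SZ






/-- An element of `SL(n, F)` is regular semisimple iff its characteristic polynomial
is squarefree, i.e. it has `n` distinct eigenvalues in an algebraic closure of `F`. -/
def IsRegularSemisimple {n : ℕ} {F : Type} [Field F]
    (g : Matrix.SpecialLinearGroup (Fin n) F) : Prop :=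
  Squarefree (Matrix.charpoly (g : Matrix (Fin n) (Fin n) F))

set_option maxHeartbeats 1000000 in
open SZ Finset Polynomial Matrix in
/-- **Lemma on regular semisimple elements**: for every `n ≥ 2` there is a constant
`C = C(n)` such that for every finite field `F` of cardinality `q`, the number of
elements of `SL(n, F)` that are not regular semisimple is at most `(C/q)·|SL(n, F)|`. -/
theorem statement5 (n : ℕ) (hn : 2 ≤ n) :
    ∃ C : ℝ, 0 < C ∧
      ∀ (q : ℕ) (F : Type) [Field F] [Fintype F], Fintype.card F = q →
        (Nat.card {g : Matrix.SpecialLinearGroup (Fin n) F // ¬ IsRegularSemisimple g} : ℝ)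
          ≤ C / (q : ℝ) * (Nat.card (Matrix.SpecialLinearGroup (Fin n) F) : ℝ) := by
  classical
  set m := n - 1 with hmdef
  have hmn : m + 1 = n := by omega
  have hm1 : 1 ≤ m := by omega
  set d : ℕ := (m + (m + 1)) * n with hddef
  have hd0 : 0 < d := by positivity
  set K : ℝ := (2 * (n : ℝ)) ^ (n * n) with hKdef
  have hK2 : (2 : ℝ) ≤ K := by
    calc (2:ℝ) = 2 ^ 1 := (pow_one 2).symm
      _ ≤ 2 ^ (n * n) := by
          refine pow_le_pow_right₀ one_le_two ?_
          nlinarith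
      _ ≤ (2 * (n:ℝ)) ^ (n * n) := by
          refine pow_le_pow_left₀ (by norm_num) ?_ _
          have : (2:ℝ) ≤ (n:ℝ) := by exact_mod_cast hn
          linarith
  have hK0 : 0 < K := lt_of_lt_of_le two_pos hK2
  refine ⟨2 * n * d * K, by positivity, ?_⟩
  intro q F _ _ hq
  subst hq
  set q := Fintype.card F with hqdef
  have hq2 : 2 ≤ q := Fintype.one_lt_card
  -- the discriminant polynomial is nonzero
  have hD0 : Dpoly F n m ≠ 0 := by
    obtain ⟨g₀, hg₀⟩ := exists_matrix_separable_charpoly (F := F) n hn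
    intro h
    have he := eval_Dpoly (F := F) n m g₀
    rw [h, map_zero] at he
    have hnd : g₀.charpoly.natDegree = m + 1 := by
      rw [Matrix.charpoly_natDegree_eq_dim, Fintype.card_fin, hmn]
    exact ((det_sylv_eq_zero_iff hm1 hnd (Matrix.charpoly_monic g₀).ne_zero).mp he.symm) hg₀
  -- counting bad matrices
  set BadM : Finset (Matrix (Fin n) (Fin n) F) :=
    univ.filter (fun g => ¬ Squarefree g.charpoly) with hBadM
  have h1 : BadM.card * q ≤ d * q ^ (n * n) := by
    have hsub : BadM.card ≤ (univ.filter
        (fun v : Fin n × Fin n → F => MvPolynomial.eval v (Dpoly F n m) = 0)).card := by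
      refine Finset.card_le_card_of_injOn (fun g => fun ij => g ij.1 ij.2) ?_ ?_
      · intro g hg
        rw [hBadM, Finset.mem_coe, mem_filter] at hg
        rw [Finset.mem_coe, mem_filter]
        refine ⟨mem_univ _, ?_⟩
        rw [eval_Dpoly]
        have hnd : g.charpoly.natDegree = m + 1 := by
          rw [Matrix.charpoly_natDegree_eq_dim, Fintype.card_fin, hmn]
        refine (det_sylv_eq_zero_iff hm1 hnd (Matrix.charpoly_monic g).ne_zero).mpr ?_
        intro hcop
        exact hg.2 ((PerfectField.separable_iff_squarefree).mp hcop)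
      · intro g₁ _ g₂ _ h
        ext i j
        exact congrFun h (i, j)
    calc BadM.card * q ≤ (univ.filter
          (fun v : Fin n × Fin n → F => MvPolynomial.eval v (Dpoly F n m) = 0)).card * q :=
        Nat.mul_le_mul_right _ hsub
      _ ≤ (Dpoly F n m).totalDegree * q ^ (Fintype.card (Fin n × Fin n)) := SZ.sz _ hD0
      _ ≤ d * q ^ (n * n) := by
          rw [Fintype.card_prod, Fintype.card_fin]
          exact Nat.mul_le_mul_right _ (totalDegree_Dpoly_le n m)
  -- counting bad SL elements
  set T := Nat.card {g : Matrix.SpecialLinearGroup (Fin n) F // ¬ IsRegularSemisimple g} with hT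
  have h2 : T * (q - 1) ≤ n * BadM.card := by
    have := Finset.card_le_mul_card_image_of_maps_to
      (f := fun p : Fˣ × {g : Matrix.SpecialLinearGroup (Fin n) F // ¬ IsRegularSemisimple g} =>
        ((p.1 : F) • ((p.2 : Matrix.SpecialLinearGroup (Fin n) F) : Matrix (Fin n) (Fin n) F)))
      (s := univ) (t := BadM) ?_ n ?_
    · rw [Finset.card_univ, Fintype.card_prod, Fintype.card_units, ← hqdef] at this
      rw [hT, Nat.card_eq_fintype_card]
      calc Fintype.card {g : Matrix.SpecialLinearGroup (Fin n) F // ¬ IsRegularSemisimple g}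
            * (q - 1)
          = (q - 1) * Fintype.card
            {g : Matrix.SpecialLinearGroup (Fin n) F // ¬ IsRegularSemisimple g} := mul_comm _ _
        _ ≤ n * BadM.card := this
    · intro p _
      rw [hBadM, mem_filter]
      refine ⟨mem_univ _, ?_⟩
      exact not_squarefree_charpoly_smul (by omega) _ _ p.2.2
    · intro a ha
      refine le_trans (Finset.card_le_card_of_injOn (fun p => ((p.1 : Fˣ) : F))
        (t := (X ^ n - C a.det).roots.toFinset) ?_ ?_) ?_
      · intro p hp
        rw [Finset.mem_coe, mem_filter] at hp
        have hdet : ((p.1 : F)) ^ n = a.det := by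
          rw [← hp.2, Matrix.det_smul, Matrix.SpecialLinearGroup.det_coe, mul_one,
            Fintype.card_fin]
        rw [Finset.mem_coe, Multiset.mem_toFinset, Polynomial.mem_roots
          (Polynomial.monic_X_pow_sub_C a.det (by omega : n ≠ 0)).ne_zero]
        simp [Polynomial.IsRoot, hdet]
      · intro p₁ hp₁ p₂ hp₂ hcoe
        simp only [Finset.coe_filter, Set.mem_setOf_eq] at hp₁ hp₂
        have h1eq : p₁.1 = p₂.1 := Units.ext hcoe
        have h2eq : p₁.2 = p₂.2 := by
          have hm₁ := hp₁.2
          have hm₂ := hp₂.2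
          rw [← hm₂, h1eq] at hm₁
          have : ((p₁.2 : Matrix.SpecialLinearGroup (Fin n) F) : Matrix (Fin n) (Fin n) F)
              = ((p₂.2 : Matrix.SpecialLinearGroup (Fin n) F) : Matrix (Fin n) (Fin n) F) := by
            have hu : ((p₂.1 : Fˣ) : F) ≠ 0 := Units.ne_zero _
            have := congrArg (fun M => ((p₂.1 : F))⁻¹ • M) hm₁
            simpa [smul_smul, inv_mul_cancel₀ hu] using this
          exact Subtype.ext (Subtype.ext this)
        exact Prod.ext h1eq h2eq
      · refine (Multiset.toFinset_card_le _).trans ?_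
        refine (Polynomial.card_roots' _).trans ?_
        rw [Polynomial.natDegree_X_pow_sub_C]
  -- counting nonsingular matrices
  set NS : Finset (Matrix (Fin n) (Fin n) F) := univ.filter (fun M => ¬ M.det = 0) with hNS
  set Sg : Finset (Matrix (Fin n) (Fin n) F) := univ.filter (fun M => M.det = 0) with hSg
  set S := Nat.card (Matrix.SpecialLinearGroup (Fin n) F) with hS
  have hS1 : 1 ≤ S := Nat.card_pos
  have i0 : Fin n := ⟨0, by omega⟩
  have h3 : NS.card ≤ (q - 1) * S := by
    have := Finset.card_le_card_of_injOn
      (f := fun M : Matrix (Fin n) (Fin n) F =>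
        if h : M.det = 0 then ((1 : Fˣ), (1 : Matrix.SpecialLinearGroup (Fin n) F))
        else ((Units.mk0 M.det h),
          (⟨M.updateRow i0 ((M.det)⁻¹ • M i0), by
            rw [Matrix.det_updateRow_smul, Matrix.updateRow_eq_self, inv_mul_cancel₀ h]
            ⟩ : Matrix.SpecialLinearGroup (Fin n) F)))
      (s := NS) (t := univ) (fun _ _ => mem_univ _) ?_
    · refine this.trans (le_of_eq ?_)
      rw [Finset.card_univ, Fintype.card_prod, Fintype.card_units, ← hqdef,
        hS, Nat.card_eq_fintype_card]
    · intro M₁ hM₁ M₂ hM₂ heq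
      simp only [Finset.coe_filter, Set.mem_setOf_eq, hNS, Finset.mem_coe, mem_filter] at hM₁ hM₂
      have h₁ : M₁.det ≠ 0 := hM₁.2
      have h₂ : M₂.det ≠ 0 := hM₂.2
      simp only [dif_neg h₁, dif_neg h₂] at heq
      have hdet : M₁.det = M₂.det := by
        have := congrArg Prod.fst heq
        simpa using congrArg Units.val this
      have hrow : M₁.updateRow i0 ((M₁.det)⁻¹ • M₁ i0) = M₂.updateRow i0 ((M₂.det)⁻¹ • M₂ i0) := by
        have := congrArg Prod.snd heq
        exact congrArg Subtype.val this
      have hrec : ∀ M : Matrix (Fin n) (Fin n) F, M.det ≠ 0 →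
          M = (M.updateRow i0 ((M.det)⁻¹ • M i0)).updateRow i0
            (M.det • (M.updateRow i0 ((M.det)⁻¹ • M i0)) i0) := by
        intro M hM
        ext i j
        rcases eq_or_ne i i0 with rfl | hi
        · rw [Matrix.updateRow_self]
          simp only [Matrix.updateRow_self]
          rw [smul_smul, mul_inv_cancel₀ hM, one_smul]
        · rw [Matrix.updateRow_ne hi, Matrix.updateRow_ne hi]
      rw [hrec M₁ h₁, hrec M₂ h₂, hrow, hdet]
  have h4 : NS.card + Sg.card = q ^ (n * n) := by
    have hcard : Fintype.card (Matrix (Fin n) (Fin n) F) = q ^ (n * n) := by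
      have : Fintype.card (Matrix (Fin n) (Fin n) F) = Fintype.card (Fin n → Fin n → F) := rfl
      rw [this, Fintype.card_fun, Fintype.card_fun, Fintype.card_fin, ← pow_mul, ← hqdef,
        mul_comm]
    rw [← hcard, ← Finset.card_univ]
    rw [hNS, hSg]
    rw [add_comm]
    exact Finset.card_filter_add_card_filter_not _
  have h5 : Sg.card * q ≤ n * q ^ (n * n) := by
    have hdet0 : (genM F n).det ≠ 0 := by
      intro h
      have := eval_det_genM n (1 : Matrix (Fin n) (Fin n) F)
      rw [h, map_zero] at this
      simp at this
    have hsub : Sg.card ≤ (univ.filter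
        (fun v : Fin n × Fin n → F => MvPolynomial.eval v (genM F n).det = 0)).card := by
      refine Finset.card_le_card_of_injOn (fun g => fun ij => g ij.1 ij.2) ?_ ?_
      · intro g hg
        rw [hSg, Finset.mem_coe, mem_filter] at hg
        rw [Finset.mem_coe, mem_filter]
        exact ⟨mem_univ _, by rw [eval_det_genM]; exact hg.2⟩
      · intro g₁ _ g₂ _ h
        ext i j
        exact congrFun h (i, j)
    calc Sg.card * q ≤ _ * q := Nat.mul_le_mul_right _ hsub
      _ ≤ (genM F n).det.totalDegree * q ^ (Fintype.card (Fin n × Fin n)) := SZ.sz _ hdet0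
      _ ≤ n * q ^ (n * n) := by
          rw [Fintype.card_prod, Fintype.card_fin]
          exact Nat.mul_le_mul_right _ (totalDegree_det_genM_le n)
  -- now real arithmetic
  have hq1 : (1:ℝ) ≤ (q:ℝ) := by exact_mod_cast (by omega : 1 ≤ q)
  have hQ2 : (2:ℝ) ≤ (q:ℝ) := by exact_mod_cast hq2
  have hQ0 : (0:ℝ) < q := by linarith
  set Q : ℝ := (q : ℝ) with hQdef
  set P : ℝ := Q ^ (n * n) with hPdef
  have hP0 : (0:ℝ) < P := by positivity
  have hT0 : (0:ℝ) ≤ (T:ℝ) := Nat.cast_nonneg _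
  have hB0 : (0:ℝ) ≤ (BadM.card:ℝ) := Nat.cast_nonneg _
  have hn0 : (0:ℝ) ≤ (n:ℝ) := Nat.cast_nonneg _
  have hd0' : (0:ℝ) < (d:ℝ) := by exact_mod_cast hd0
  have h1R : (BadM.card : ℝ) * Q ≤ d * P := by
    rw [hPdef, hQdef]
    exact_mod_cast h1
  have h2R : (T : ℝ) * (Q - 1) ≤ n * BadM.card := by
    have : ((T * (q-1) : ℕ) : ℝ) ≤ ((n * BadM.card : ℕ) : ℝ) := by exact_mod_cast h2
    rw [Nat.cast_mul, Nat.cast_mul, Nat.cast_sub (by omega : 1 ≤ q)] at this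
    simpa using this
  have h3R : (NS.card : ℝ) ≤ (Q - 1) * S := by
    have : ((NS.card : ℕ) : ℝ) ≤ (((q-1) * S : ℕ) : ℝ) := by exact_mod_cast h3
    rw [Nat.cast_mul, Nat.cast_sub (by omega : 1 ≤ q)] at this
    simpa using this
  have h4R : (NS.card : ℝ) + Sg.card = P := by
    rw [hPdef, hQdef]
    exact_mod_cast h4
  have h5R : (Sg.card : ℝ) * Q ≤ n * P := by
    rw [hPdef, hQdef]
    exact_mod_cast h5
  have hS0 : (1:ℝ) ≤ (S:ℝ) := by exact_mod_cast hS1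
  -- T bound
  have hTb : (T:ℝ) * (Q * Q) ≤ 2 * n * d * P := by
    have s1 : (T:ℝ) * (Q - 1) * Q ≤ (n:ℝ) * ((BadM.card : ℝ) * Q) := by
      have h := mul_le_mul_of_nonneg_right h2R hQ0.le
      calc (T:ℝ) * (Q - 1) * Q ≤ (n:ℝ) * (BadM.card : ℝ) * Q := h
        _ = (n:ℝ) * ((BadM.card : ℝ) * Q) := by ring
    have s2 : (n:ℝ) * ((BadM.card:ℝ) * Q) ≤ (n:ℝ) * ((d:ℝ) * P) :=
      mul_le_mul_of_nonneg_left h1R hn0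
    have hh : (T:ℝ) * (Q - 1) * Q ≤ (n:ℝ) * ((d:ℝ) * P) := s1.trans s2
    have key : 0 ≤ (T:ℝ) * Q * (2 * (Q - 1) - Q) :=
      mul_nonneg (mul_nonneg hT0 hQ0.le) (by linarith)
    nlinarith [hh, key]
  -- S lower bound : P ≤ K * (Q * S)
  have hSb : P ≤ K * (Q * S) := by
    rcases le_or_gt (2 * (n:ℝ)) Q with hcase | hcase
    · -- large q
      have hn0' : (0:ℝ) < Q := hQ0
      have hSg2 : (Sg.card : ℝ) ≤ P / 2 := by
        have : (Sg.card : ℝ) * Q ≤ n * P := h5R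
        have h2n : (n:ℝ) ≤ Q / 2 := by linarith
        nlinarith [hP0, hQ0]
      have hNS2 : P / 2 ≤ (NS.card : ℝ) := by linarith
      have : P / 2 ≤ (Q - 1) * S := le_trans hNS2 h3R
      have hQS : (Q - 1) * S ≤ Q * S := by nlinarith [hS0]
      calc P ≤ 2 * (Q * S) := by nlinarith
        _ ≤ K * (Q * S) := by nlinarith [hK2, hQ0, hS0]
    · -- small q
      have hPK : P ≤ K := by
        rw [hPdef, hKdef]
        exact pow_le_pow_left₀ hQ0.le hcase.le _
      have hQS1 : (1:ℝ) ≤ Q * S := by nlinarith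
      nlinarith [hK0]
  -- conclude
  have hfinal : (T:ℝ) * Q ≤ (2 * n * d * K) * S := by
    have hc : (T:ℝ) * (Q * Q) ≤ 2 * n * d * (K * (Q * S)) := by
      refine hTb.trans ?_
      have : (0:ℝ) ≤ 2 * n * d := by positivity
      exact mul_le_mul_of_nonneg_left hSb this
    have := le_of_mul_le_mul_right (by nlinarith [hc] : ((T:ℝ) * Q) * Q ≤ ((2 * n * d * K) * S) * Q) hQ0
    exact this
  rw [div_mul_eq_mul_div, le_div_iff₀ hQ0]
  calc (T:ℝ) * Q ≤ (2 * n * d * K) * S := hfinal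
    _ = 2 * ↑n * ↑d * K * ↑S := by ring
end

section
/- Let p be an odd prime and let P be a finite p-group of symplectic type that has exponent p and order p^{2m+1}. Let C = C_{Aut(P)}(Z(P)) be the group of automorphisms of P that fix the center Z(P) elementwise. Then C can be embedded in the symmetric group Sym(p^{2m}), i.e., there is an injective group homomorphism C → Sym(p^{2m}). -/
namespace St13

variable {P : Type} [Group P]

/-- commutator `a⁻¹ b⁻¹ a b`. -/
def q (a b : P) : P := a⁻¹ * b⁻¹ * a * b

lemma mul_eq_q (a b : P) : a * b = b * a * q a b := by unfold q; group

lemma q_inv (a b : P) : (q a b)⁻¹ = q b a := by unfold q; group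

lemma q_mul_right (a b c : P) : q a (b * c) = q a c * (c⁻¹ * q a b * c) := by unfold q; group

lemma q_mul_left (a b c : P) : q (a * b) c = b⁻¹ * q a c * b * q b c := by unfold q; group

@[simp] lemma q_one_right (a : P) : q a 1 = 1 := by unfold q; group

@[simp] lemma q_one_left (b : P) : q 1 b = 1 := by unfold q; group

lemma q_eq_one_of_comm {a b : P} (h : a * b = b * a) : q a b = 1 := by
  unfold q
  calc a⁻¹ * b⁻¹ * a * b = a⁻¹ * (b⁻¹ * (a * b)) := by group
    _ = a⁻¹ * (b⁻¹ * (b * a)) := by rw [h]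
    _ = 1 := by group

lemma comm_of_q_eq_one {a b : P} (h : q a b = 1) : a * b = b * a := by
  have := mul_eq_q a b; rw [h, mul_one] at this; exact this

lemma zc_comm {z : P} (hz : z ∈ Subgroup.center P) (g : P) : z * g = g * z :=
  (Subgroup.mem_center_iff.mp hz g).symm

lemma q_central_right {b : P} (hb : b ∈ Subgroup.center P) (a : P) : q a b = 1 :=
  q_eq_one_of_comm (zc_comm hb a).symm

lemma q_central_left {a : P} (ha : a ∈ Subgroup.center P) (b : P) : q a b = 1 :=
  q_eq_one_of_comm (zc_comm ha b)

lemma q_self_pow (x : P) (i j : ℕ) : q (x ^ i) (x ^ j) = 1 :=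
  q_eq_one_of_comm ((Commute.pow_pow (Commute.refl x) i j))

lemma q_mul_right' {a b : P} (h : q a b ∈ Subgroup.center P) (c : P) :
    q a (b * c) = q a b * q a c := by
  rw [q_mul_right, mul_assoc c⁻¹, zc_comm h c, inv_mul_cancel_left, ← zc_comm h (q a c)]

lemma q_mul_left' {a c : P} (h : q a c ∈ Subgroup.center P) (b : P) :
    q (a * b) c = q a c * q b c := by
  rw [q_mul_left, mul_assoc b⁻¹, zc_comm h b, inv_mul_cancel_left]

lemma q_pow_right {a x : P} (h : q a x ∈ Subgroup.center P) (j : ℕ) :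
    q a (x ^ j) = q a x ^ j := by
  induction j with
  | zero => simp
  | succ n ih =>
      rw [pow_succ', q_mul_right' h, ih, pow_succ']

lemma q_pow_left {x b : P} (h : q b x ∈ Subgroup.center P) (i : ℕ) :
    q (x ^ i) b = q x b ^ i := by
  have h2 : q x b = (q b x)⁻¹ := (q_inv b x).symm
  have : q b (x ^ i) = q b x ^ i := q_pow_right h i
  calc q (x ^ i) b = (q b (x ^ i))⁻¹ := (q_inv b (x ^ i)).symm
    _ = (q b x ^ i)⁻¹ := by rw [this]
    _ = ((q b x)⁻¹) ^ i := by rw [inv_pow]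
    _ = q x b ^ i := by rw [h2]

lemma pow_mod {G : Type} [Monoid G] {x : G} {p : ℕ} (hx : x ^ p = 1) (a : ℕ) :
    x ^ a = x ^ (a % p) := by
  conv_lhs => rw [← Nat.div_add_mod a p]
  rw [pow_add, pow_mul, hx, one_pow, one_mul]


lemma comm_identity {G : Type} [CommGroup G] (i j σ : ℕ) (FA FB CAB CAX CBX D T : G)
    (hD : D * CBX = 1) :
    FA * FB * CAB ^ σ * (D ^ i) ^ (2 * σ) * (CAX * CBX) ^ ((i + j) * σ) * T ^ (i + j)
    = FA * CAX ^ (i * σ) * T ^ i * (FB * CBX ^ (j * σ) * T ^ j)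
      * (CAB * CAX ^ j * D ^ i) ^ σ := by
  have h1 : D ^ (i * σ) * CBX ^ (i * σ) = 1 := by rw [← mul_pow, hD, one_pow]
  have e1 : i * (2 * σ) = i * σ + i * σ := by ring
  have e2 : (i + j) * σ = i * σ + j * σ := by ring
  conv_rhs => rw [← mul_one (FA * CAX ^ (i * σ) * T ^ i * (FB * CBX ^ (j * σ) * T ^ j)
      * (CAB * CAX ^ j * D ^ i) ^ σ), ← h1]
  simp only [← pow_mul, e1, e2, mul_pow, pow_add]
  ring_nf
  simp only [mul_comm, mul_left_comm, mul_assoc]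


section Decomp
variable {p : ℕ} {N H : Subgroup P} {x : P}

lemma decomp (hp : p.Prime) (hexp : ∀ y : P, y ^ p = 1)
    (hN : ∀ a ∈ N, ∀ b : P, q a b ∈ Subgroup.center P)
    (hZH : Subgroup.center P ≤ H) (hx : x ∈ N) :
    ∀ w ∈ H ⊔ Subgroup.zpowers x, ∃ a ∈ H, ∃ j, j < p ∧ w = a * x ^ j := by
  set S : Subgroup P := {
    carrier := {w | ∃ a ∈ H, ∃ j, j < p ∧ w = a * x ^ j}
    one_mem' := ⟨1, H.one_mem, 0, hp.pos, by simp⟩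
    mul_mem' := by
      rintro u v ⟨a, ha, i, hi, rfl⟩ ⟨b, hb, j, hj, rfl⟩
      have hc : q (x ^ i) b ∈ Subgroup.center P := hN _ (N.pow_mem hx i) b
      refine ⟨a * b * q (x ^ i) b, H.mul_mem (H.mul_mem ha hb) (hZH hc), (i + j) % p,
        Nat.mod_lt _ hp.pos, ?_⟩
      calc a * x ^ i * (b * x ^ j) = a * (x ^ i * b) * x ^ j := by group
        _ = a * (b * x ^ i * q (x ^ i) b) * x ^ j := by rw [← mul_eq_q]
        _ = a * b * (x ^ i * q (x ^ i) b) * x ^ j := by group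
        _ = a * b * (q (x ^ i) b * x ^ i) * x ^ j := by rw [zc_comm hc]
        _ = a * b * q (x ^ i) b * x ^ (i + j) := by rw [pow_add]; group
        _ = a * b * q (x ^ i) b * x ^ ((i + j) % p) := by rw [← pow_mod (hexp x)]
    inv_mem' := by
      rintro u ⟨a, ha, j, hj, rfl⟩
      rcases Nat.eq_zero_or_pos j with rfl | hj0
      · exact ⟨a⁻¹, H.inv_mem ha, 0, hp.pos, by simp⟩
      · have hinv : (x ^ j)⁻¹ = x ^ (p - j) := by
          apply inv_eq_of_mul_eq_one_right
          rw [← pow_add, Nat.add_sub_cancel' (le_of_lt hj), hexp]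
        have hc : q (x ^ (p - j)) a⁻¹ ∈ Subgroup.center P := hN _ (N.pow_mem hx _) _
        refine ⟨a⁻¹ * q (x ^ (p - j)) a⁻¹, H.mul_mem (H.inv_mem ha) (hZH hc), p - j,
          Nat.sub_lt hp.pos hj0, ?_⟩
        calc (a * x ^ j)⁻¹ = (x ^ j)⁻¹ * a⁻¹ := by group
          _ = x ^ (p - j) * a⁻¹ := by rw [hinv]
          _ = a⁻¹ * x ^ (p - j) * q (x ^ (p - j)) a⁻¹ := mul_eq_q _ _
          _ = a⁻¹ * (x ^ (p - j) * q (x ^ (p - j)) a⁻¹) := by group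
          _ = a⁻¹ * (q (x ^ (p - j)) a⁻¹ * x ^ (p - j)) := by rw [zc_comm hc]
          _ = a⁻¹ * q (x ^ (p - j)) a⁻¹ * x ^ (p - j) := by group }
  have h1 : H ≤ S := fun a ha => ⟨a, ha, 0, hp.pos, by simp⟩
  have h2 : Subgroup.zpowers x ≤ S :=
    Subgroup.zpowers_le.mpr ⟨1, H.one_mem, 1, hp.one_lt, by simp⟩
  exact fun w hw => sup_le h1 h2 hw

lemma decomp_unique (hp : p.Prime) (hexp : ∀ y : P, y ^ p = 1) (hx' : x ∉ H)
    {a b : P} {i j : ℕ} (ha : a ∈ H) (hb : b ∈ H) (hi : i < p) (hj : j < p)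
    (heq : a * x ^ i = b * x ^ j) : a = b ∧ i = j := by
  have key : ∀ {c d : P} {k l : ℕ}, c ∈ H → d ∈ H → k < p → l < p → k ≤ l →
      c * x ^ k = d * x ^ l → c = d ∧ k = l := by
    intro c d k l hc hd hk hl hkl he
    have hdc : d⁻¹ * c = x ^ (l - k) := by
      have : d⁻¹ * (c * x ^ k) = x ^ l := by rw [he]; group
      have h2 : d⁻¹ * c = x ^ l * (x ^ k)⁻¹ := by
        rw [← this]; group
      rw [h2, ← pow_sub_mul_pow x hkl]
      group
    by_cases hne : k = l
    · subst hne
      simp only [Nat.sub_self, pow_zero] at hdc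
      constructor
      · have := hdc.symm
        calc c = d * (d⁻¹ * c) := by group
          _ = d := by rw [hdc]; group
      · rfl
    · exfalso
      set e := l - k with he'
      have he0 : 0 < e := Nat.sub_pos_of_lt (lt_of_le_of_ne hkl hne)
      have hep : e < p := lt_of_le_of_lt (Nat.sub_le l k) hl
      have hxe : x ^ e ∈ H := by rw [← hdc]; exact H.mul_mem (H.inv_mem hd) hc
      have hnd : ¬ p ∣ e := fun hdvd => absurd (Nat.le_of_dvd he0 hdvd) (not_le.mpr hep)
      have hcop : Nat.Coprime e p := ((Nat.Prime.coprime_iff_not_dvd hp).mpr hnd).symm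
      obtain ⟨u, -, hu⟩ := Nat.exists_mul_mod_eq_one_of_coprime hcop hp.one_lt
      have : x = (x ^ e) ^ u := by
        rw [← pow_mul, pow_mod (hexp x), hu, pow_one]
      exact hx' (this ▸ H.pow_mem hxe u)
  rcases le_total i j with h | h
  · exact key ha hb hi hj h heq
  · obtain ⟨h1, h2⟩ := key hb ha hj hi h heq.symm
    exact ⟨h1.symm, h2.symm⟩


end Decomp

/-- the key predicate: `f` is a "`σ`-twisted retraction onto the center" on `H`. -/
def Good (p σ : ℕ) (H : Subgroup P) (f : P → P) : Prop :=
  (∀ w, f w ∈ Subgroup.center P) ∧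
  (∀ z ∈ Subgroup.center P, f z = z ^ (2 * σ)) ∧
  (∀ a ∈ H, ∀ b ∈ H, f (a * b) = f a * f b * q a b ^ σ)

lemma zc_pow_p {p : ℕ} (hexp : ∀ y : P, y ^ p = 1) (z : ↥(Subgroup.center P)) :
    z ^ p = 1 := by
  ext
  push_cast
  exact hexp _

lemma good_base (p σ : ℕ) :
    ∃ f, Good p σ (Subgroup.center P) f := by
  classical
  refine ⟨fun w => if h : w ∈ Subgroup.center P then w ^ (2 * σ) else 1, ?_, ?_, ?_⟩
  · intro w
    by_cases h : w ∈ Subgroup.center P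
    · simpa [h] using (Subgroup.center P).pow_mem h (2 * σ)
    · simp only [dif_neg h]; exact one_mem _
  · intro z hz; simp [hz]
  · intro a ha b hb
    have hab : a * b ∈ Subgroup.center P := mul_mem ha hb
    simp only [dif_pos ha, dif_pos hb, dif_pos hab]
    rw [q_central_left ha, one_pow, mul_one]
    exact Commute.mul_pow (zc_comm ha b) (2 * σ)

lemma good_one {p σ : ℕ} {H : Subgroup P} {f : P → P} (hf : Good p σ H f) : f 1 = 1 := by
  have h := hf.2.2 1 H.one_mem 1 H.one_mem
  rw [q_one_right, one_pow, mul_one, mul_one] at h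
  exact (left_eq_mul.mp h)

lemma ext_good {p : ℕ} {N H : Subgroup P} {x : P} (hp : p.Prime)
    (hexp : ∀ y : P, y ^ p = 1)
    (hN : ∀ a ∈ N, ∀ b : P, q a b ∈ Subgroup.center P)
    (hZH : Subgroup.center P ≤ H) (hHN : H ≤ N) (hx : x ∈ N) (hx' : x ∉ H)
    {t : P} (ht : t ∈ Subgroup.center P) {σ : ℕ} {f : P → P} (hf : Good p σ H f) :
    ∃ g : P → P, Good p σ (H ⊔ Subgroup.zpowers x) g ∧
      ∀ a ∈ H, ∀ j : ℕ, g (a * x ^ j) = f a * q a x ^ (j * σ) * t ^ j := by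
  classical
  set g : P → P := fun w =>
    if h : ∃ aj : P × ℕ, aj.1 ∈ H ∧ aj.2 < p ∧ w = aj.1 * x ^ aj.2 then
      f h.choose.1 * q h.choose.1 x ^ (h.choose.2 * σ) * t ^ h.choose.2
    else 1 with hgdef
  have char : ∀ a ∈ H, ∀ j : ℕ, j < p → g (a * x ^ j) = f a * q a x ^ (j * σ) * t ^ j := by
    intro a ha j hj
    have hex : ∃ aj : P × ℕ, aj.1 ∈ H ∧ aj.2 < p ∧ a * x ^ j = aj.1 * x ^ aj.2 :=
      ⟨(a, j), ha, hj, rfl⟩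
    rw [hgdef]
    simp only [dif_pos hex]
    obtain ⟨h1, h2⟩ := decomp_unique hp hexp hx' ha hex.choose_spec.1 hj
      hex.choose_spec.2.1 hex.choose_spec.2.2
    rw [← h1, ← h2]
  have char' : ∀ a ∈ H, ∀ j : ℕ, g (a * x ^ j) = f a * q a x ^ (j * σ) * t ^ j := by
    intro a ha j
    have h1 : a * x ^ j = a * x ^ (j % p) := by rw [← pow_mod (hexp x)]
    rw [h1, char a ha _ (Nat.mod_lt _ hp.pos)]
    congr 1
    · congr 1
      rw [pow_mul, pow_mul, ← pow_mod (hexp (q a x))]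
    · rw [← pow_mod (hexp t)]
  refine ⟨g, ⟨?_, ?_, ?_⟩, char'⟩
  · -- values in the center
    intro w
    rw [hgdef]
    by_cases h : ∃ aj : P × ℕ, aj.1 ∈ H ∧ aj.2 < p ∧ w = aj.1 * x ^ aj.2
    · simp only [dif_pos h]
      exact mul_mem (mul_mem (hf.1 _)
        (pow_mem (hN _ (hHN h.choose_spec.1) x) _)) (pow_mem ht _)
    · simp only [dif_neg h]; exact one_mem _
  · -- value on the center
    intro z hz
    have h0 : z = z * x ^ 0 := by simp
    rw [h0, char' z (hZH hz) 0]
    simp [hf.2.1 z hz]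
  · -- multiplicativity
    intro u hu v hv
    obtain ⟨a, ha, i, hi, rfl⟩ := decomp hp hexp hN hZH hx u hu
    obtain ⟨b, hb, j, hj, rfl⟩ := decomp hp hexp hN hZH hx v hv
    have hcax : q a x ∈ Subgroup.center P := hN a (hHN ha) x
    have hcbx : q b x ∈ Subgroup.center P := hN b (hHN hb) x
    have hcab : q a b ∈ Subgroup.center P := hN a (hHN ha) b
    have hd : q x b ∈ Subgroup.center P := by
      rw [← q_inv]; exact inv_mem hcbx
    have hprod : (a * x ^ i) * (b * x ^ j) = (a * b * q x b ^ i) * x ^ (i + j) := by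
      calc (a * x ^ i) * (b * x ^ j) = a * (x ^ i * b) * x ^ j := by group
        _ = a * (b * x ^ i * q (x ^ i) b) * x ^ j := by rw [← mul_eq_q]
        _ = a * b * (x ^ i * q (x ^ i) b) * x ^ j := by group
        _ = a * b * (q (x ^ i) b * x ^ i) * x ^ j := by
              rw [zc_comm (hN _ (N.pow_mem hx i) b)]
        _ = a * b * q (x ^ i) b * x ^ (i + j) := by rw [pow_add]; group
        _ = a * b * q x b ^ i * x ^ (i + j) := by rw [q_pow_left hcbx]
    rw [hprod]
    have hdi : q x b ^ i ∈ Subgroup.center P := pow_mem hd i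
    have hmem2 : a * b * q x b ^ i ∈ H := mul_mem (mul_mem ha hb) (hZH hdi)
    rw [char' _ hmem2 (i + j), char' a ha i, char' b hb j]
    have hE1 : f (a * b * q x b ^ i) = f a * f b * q a b ^ σ * (q x b ^ i) ^ (2 * σ) := by
      rw [hf.2.2 (a * b) (mul_mem ha hb) _ (hZH hdi), hf.2.2 a ha b hb,
        hf.2.1 _ hdi, q_central_right hdi, one_pow, mul_one]
    have hE2 : q (a * b * q x b ^ i) x = q a x * q b x := by
      rw [q_mul_left' (hN _ (mul_mem (hHN ha) (hHN hb)) x), q_central_left hdi, mul_one,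
        q_mul_left' hcax]
    have hE3 : q (a * x ^ i) (b * x ^ j) = q a b * q a x ^ j * q x b ^ i := by
      rw [q_mul_left' (hN a (hHN ha) (b * x ^ j)), q_mul_right' hcab, q_pow_right hcax,
        q_mul_right' (hN _ (N.pow_mem hx i) b), q_self_pow, mul_one, q_pow_left hcbx,
        mul_assoc]
    rw [hE1, hE2, hE3]
    -- lift to the center, which is a commutative group
    have hDC : q x b * q b x = 1 := by rw [← q_inv b x]; exact inv_mul_cancel _
    set Z := Subgroup.center P
    let FA : Z := ⟨f a, hf.1 a⟩
    let FB : Z := ⟨f b, hf.1 b⟩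
    let CAB : Z := ⟨q a b, hcab⟩
    let CAX : Z := ⟨q a x, hcax⟩
    let CBX : Z := ⟨q b x, hcbx⟩
    let D : Z := ⟨q x b, hd⟩
    let T : Z := ⟨t, ht⟩
    open IsMulCommutative in
    have key := comm_identity (G := Z) i j σ FA FB CAB CAX CBX D T
      (by ext; push_cast [hDC]; exact hDC)
    have key' := congrArg (Subtype.val) key
    push_cast at key'
    convert key' using 1 <;> push_cast <;> group


lemma q_pow_self (y : P) (j : ℕ) : q (y ^ j) y = 1 := by
  have := q_self_pow y j 1; rwa [pow_one] at this

lemma good_pow {p σ : ℕ} {N : Subgroup P} {f : P → P} (hf : Good p σ N f)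
    {y : P} (hy : y ∈ N) : ∀ j : ℕ, f (y ^ j) = f y ^ j := by
  intro j
  induction j with
  | zero => simpa using good_one hf
  | succ n ih =>
      rw [pow_succ, hf.2.2 _ (N.pow_mem hy n) y hy, ih, q_pow_self, one_pow, mul_one,
        pow_succ]

lemma card_sup {p : ℕ} {N H : Subgroup P} {x : P} (hp : p.Prime)
    (hexp : ∀ y : P, y ^ p = 1)
    (hN : ∀ a ∈ N, ∀ b : P, q a b ∈ Subgroup.center P)
    (hZH : Subgroup.center P ≤ H) (hx : x ∈ N) (hx' : x ∉ H) :
    Nat.card ↥(H ⊔ Subgroup.zpowers x) = Nat.card ↥H * p := by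
  have hbij : Function.Bijective (fun hj : ↥H × Fin p =>
      (⟨(hj.1 : P) * x ^ (hj.2 : ℕ), mul_mem (Subgroup.mem_sup_left hj.1.2)
        (pow_mem (Subgroup.mem_sup_right (Subgroup.mem_zpowers x)) _)⟩ :
          ↥(H ⊔ Subgroup.zpowers x))) := by
    constructor
    · rintro ⟨⟨a, ha⟩, i⟩ ⟨⟨b, hb⟩, j⟩ hab
      simp only [Subtype.mk.injEq] at hab
      obtain ⟨h1, h2⟩ := decomp_unique hp hexp hx' ha hb i.2 j.2 hab
      simp [h1, Fin.ext_iff, h2]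
    · rintro ⟨w, hw⟩
      obtain ⟨a, ha, j, hj, rfl⟩ := decomp hp hexp hN hZH hx w hw
      exact ⟨(⟨a, ha⟩, ⟨j, hj⟩), rfl⟩
  have := Nat.card_congr (Equiv.ofBijective _ hbij)
  simp only [Nat.card_prod, Nat.card_eq_fintype_card (α := Fin p), Fintype.card_fin] at this
  exact this.symm


lemma q_inv_left (a b : P) : q a⁻¹ b = a * (q a b)⁻¹ * a⁻¹ := by unfold q; group

lemma q_map (φ : P ≃* P) (a b : P) : φ (q a b) = q (φ a) (φ b) := by unfold q; simp

lemma char_mem_map_iff {S : Subgroup P} (hS : S.Characteristic) (φ : P ≃* P) (w : P) :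
    φ w ∈ S ↔ w ∈ S := by
  have h := Subgroup.characteristic_iff_comap_eq.mp hS φ
  constructor
  · intro hw
    have : w ∈ Subgroup.comap φ.toMonoidHom S := hw
    rwa [h] at this
  · intro hw
    rw [← h] at hw
    exact hw

lemma mem_center_map_iff (φ : P ≃* P) (w : P) :
    φ w ∈ Subgroup.center P ↔ w ∈ Subgroup.center P :=
  char_mem_map_iff inferInstance φ w

/-- `K` is the second centre of `P`. -/
def K (P : Type) [Group P] : Subgroup P where
  carrier := {a | ∀ b : P, q a b ∈ Subgroup.center P}
  one_mem' := fun b => by rw [q_one_left]; exact one_mem _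
  mul_mem' := by
    intro a c ha hc b
    rw [q_mul_left' (ha b)]
    exact mul_mem (ha b) (hc b)
  inv_mem' := by
    intro a ha b
    rw [q_inv_left, mul_assoc]
    have hz := inv_mem (ha b)
    rw [zc_comm hz a⁻¹, ← mul_assoc, mul_inv_cancel, one_mul]
    exact hz

lemma mem_K_iff {a : P} : a ∈ K P ↔ ∀ b : P, q a b ∈ Subgroup.center P := Iff.rfl

lemma center_le_K : Subgroup.center P ≤ K P := fun z hz b => by
  rw [q_central_left hz]; exact one_mem _

lemma q_mem_center_of_right_K {a b : P} (hb : b ∈ K P) : q a b ∈ Subgroup.center P := by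
  rw [← q_inv]
  exact inv_mem (hb a)

instance K_characteristic : (K P).Characteristic := by
  rw [Subgroup.characteristic_iff_comap_eq]
  intro φ
  ext x
  simp only [Subgroup.mem_comap]
  constructor
  · intro hx b
    have h1 := hx (φ b)
    have h2 : q (φ x) (φ b) ∈ Subgroup.center P := h1
    rw [← q_map, mem_center_map_iff] at h2
    exact h2
  · intro hx b
    have h1 := hx (φ.symm b)
    rw [← mem_center_map_iff φ, q_map] at h1
    show q (φ x) b ∈ _
    simpa using h1

lemma centralizer_characteristic {S : Subgroup P} (hchar : S.Characteristic) :
    (Subgroup.centralizer (S : Set P)).Characteristic := by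
  rw [Subgroup.characteristic_iff_comap_eq]
  intro φ
  ext x
  simp only [Subgroup.mem_comap, Subgroup.mem_centralizer_iff]
  constructor
  · intro hx h hh
    have h2 := hx (φ h) ((char_mem_map_iff hchar φ h).mpr hh)
    have := congrArg φ.symm h2
    simpa using this
  · intro hx h hh
    have h4 : φ.symm h ∈ S := by
      rw [← char_mem_map_iff hchar φ]
      simpa using hh
    have := congrArg φ (hx (φ.symm h) h4)
    simpa using this

lemma inf_characteristic {A B : Subgroup P} (hA : A.Characteristic) (hB : B.Characteristic) :
    (A ⊓ B).Characteristic := by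
  rw [Subgroup.characteristic_iff_comap_eq]
  intro φ
  ext x
  simp only [Subgroup.mem_comap, Subgroup.mem_inf]
  rw [show (φ.toMonoidHom x : P) = φ x from rfl, char_mem_map_iff hA, char_mem_map_iff hB]




section FiniteStuff
variable [Finite P]

lemma card_lt {H K : Subgroup P} (h : H < K) : Nat.card ↥H < Nat.card ↥K := by
  have hss : (H : Set P) ⊂ (K : Set P) := by
    rw [Set.ssubset_iff_of_subset (by exact_mod_cast h.le)]
    obtain ⟨x, hx1, hx2⟩ := SetLike.exists_of_lt h
    exact ⟨x, hx1, hx2⟩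
  have h1 : Nat.card ↥H = (H : Set P).ncard := Nat.card_coe_set_eq _
  have h2 : Nat.card ↥K = (K : Set P).ncard := Nat.card_coe_set_eq _
  rw [h1, h2]
  exact Set.ncard_lt_ncard hss (Set.toFinite _)

lemma reach_top {p : ℕ} {N : Subgroup P} (hp : p.Prime)
    (hexp : ∀ y : P, y ^ p = 1)
    (hN : ∀ a ∈ N, ∀ b : P, q a b ∈ Subgroup.center P) :
    ∀ (n : ℕ) (H : Subgroup P) (σ : ℕ) (f : P → P),
      Nat.card ↥N - Nat.card ↥H ≤ n → Subgroup.center P ≤ H → H ≤ N → Good p σ H f →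
      ∃ g, Good p σ N g ∧ ∀ w ∈ H, g w = f w := by
  intro n
  induction n with
  | zero =>
      intro H σ f hle hZH hHN hf
      have hHN' : H = N := Subgroup.eq_of_le_of_card_ge hHN (by omega)
      subst hHN'
      exact ⟨f, hf, fun w _ => rfl⟩
  | succ n ih =>
      intro H σ f hle hZH hHN hf
      by_cases hc : N ≤ H
      · have hHN' : H = N := le_antisymm hHN hc
        subst hHN'
        exact ⟨f, hf, fun w _ => rfl⟩
      · obtain ⟨x, hxN, hxH⟩ := SetLike.exists_of_lt (lt_of_le_of_ne hHN (fun h => hc h.ge))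
        obtain ⟨g, hg, hgext⟩ := ext_good hp hexp hN hZH hHN hxN hxH (one_mem _) hf
        have hH'N : H ⊔ Subgroup.zpowers x ≤ N := sup_le hHN (Subgroup.zpowers_le.mpr hxN)
        have hlt : Nat.card ↥H < Nat.card ↥(H ⊔ Subgroup.zpowers x) :=
          card_lt (lt_of_le_of_ne le_sup_left
            (fun he => hxH (he ▸ Subgroup.mem_sup_right (Subgroup.mem_zpowers x))))
        obtain ⟨g', hg', hg'ext⟩ := ih (H ⊔ Subgroup.zpowers x) σ g (by omega)
          (le_trans hZH le_sup_left) hH'N hg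
        refine ⟨g', hg', fun w hw => ?_⟩
        rw [hg'ext w (Subgroup.mem_sup_left hw)]
        simpa using hgext w hw 0


lemma count_aux {p : ℕ} {N : Subgroup P} (hp : p.Prime)
    (hexp : ∀ y : P, y ^ p = 1)
    (hN : ∀ a ∈ N, ∀ b : P, q a b ∈ Subgroup.center P) :
    ∀ (n : ℕ) (H : Subgroup P),
      Nat.card ↥N - Nat.card ↥H ≤ n → Subgroup.center P ≤ H → H ≤ N →
      ∃ (k : ℕ) (xs : Fin k → P), (∀ i, xs i ∈ N) ∧
        Nat.card ↥N = Nat.card ↥H * p ^ k ∧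
        ∀ (σ : ℕ) (f g : P → P), Good p σ N f → Good p σ N g →
          (∀ w ∈ H, f w = g w) → (∀ i, f (xs i) = g (xs i)) → ∀ w ∈ N, f w = g w := by
  intro n
  induction n with
  | zero =>
      intro H hle hZH hHN
      have hHN' : H = N := Subgroup.eq_of_le_of_card_ge hHN (by omega)
      subst hHN'
      exact ⟨0, fun i => i.elim0, fun i => i.elim0, by simp,
        fun σ f g hf hg hfg _ w hw => hfg w hw⟩
  | succ n ih =>
      intro H hle hZH hHN
      by_cases hc : N ≤ H
      · have hHN' : H = N := le_antisymm hHN hc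
        subst hHN'
        exact ⟨0, fun i => i.elim0, fun i => i.elim0, by simp,
          fun σ f g hf hg hfg _ w hw => hfg w hw⟩
      · obtain ⟨x, hxN, hxH⟩ := SetLike.exists_of_lt (lt_of_le_of_ne hHN (fun h => hc h.ge))
        have hH'N : H ⊔ Subgroup.zpowers x ≤ N := sup_le hHN (Subgroup.zpowers_le.mpr hxN)
        have hZH' : Subgroup.center P ≤ H ⊔ Subgroup.zpowers x := le_trans hZH le_sup_left
        have hcard : Nat.card ↥(H ⊔ Subgroup.zpowers x) = Nat.card ↥H * p :=
          card_sup hp hexp hN hZH hxN hxH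
        have hlt : Nat.card ↥H < Nat.card ↥(H ⊔ Subgroup.zpowers x) :=
          card_lt (lt_of_le_of_ne le_sup_left
            (fun he => hxH (he ▸ Subgroup.mem_sup_right (Subgroup.mem_zpowers x))))
        obtain ⟨k, xs, hxsN, hcard', hprop⟩ :=
          ih (H ⊔ Subgroup.zpowers x) (by omega) hZH' hH'N
        refine ⟨k + 1, Fin.cons x xs, ?_, ?_, ?_⟩
        · intro i
          refine Fin.cases ?_ ?_ i
          · simpa using hxN
          · intro i'; simpa using hxsN i'
        · rw [hcard', hcard]; ring
        · intro σ f g hf hg hfg hxs w hw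
          have hfgx : f x = g x := by simpa using hxs 0
          refine hprop σ f g hf hg ?_ (fun i => by simpa using hxs i.succ) w hw
          intro w' hw'
          obtain ⟨a, ha, j, hj, rfl⟩ := decomp hp hexp hN hZH hxN w' hw'
          rw [hf.2.2 a (hHN ha) _ (N.pow_mem hxN j), hg.2.2 a (hHN ha) _ (N.pow_mem hxN j),
            good_pow hf hxN, good_pow hg hxN, hfg a ha, hfgx]


lemma card_le_of_char_comm {p : ℕ} (hp : p.Prime) (hexp : ∀ y : P, y ^ p = 1)
    (hsymp : ∀ H : Subgroup P, H.Characteristic →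
      (∀ x y : ↥H, x * y = y * x) → IsCyclic ↥H)
    {W : Subgroup P} (hchar : W.Characteristic) (hcomm : ∀ x y : ↥W, x * y = y * x) :
    Nat.card ↥W ≤ p := by
  have hcyc := hsymp W hchar hcomm
  obtain ⟨g, hg⟩ := hcyc.exists_generator
  have h1 : orderOf g = Nat.card ↥W := orderOf_eq_card_of_forall_mem_zpowers hg
  have h2 : g ^ p = 1 := by
    ext
    push_cast
    exact hexp _
  have h3 : orderOf g ∣ p := orderOf_dvd_of_pow_eq_one h2
  rw [← h1]
  exact Nat.le_of_dvd hp.pos h3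

lemma center_card_eq {p : ℕ} (hp : p.Prime) (hexp : ∀ y : P, y ^ p = 1) [Nontrivial P]
    (hsymp : ∀ H : Subgroup P, H.Characteristic →
      (∀ x y : ↥H, x * y = y * x) → IsCyclic ↥H)
    (hpg : IsPGroup p P) :
    Nat.card ↥(Subgroup.center P) = p := by
  haveI := Fact.mk hp
  haveI := hpg.center_nontrivial
  have h1 : Nat.card ↥(Subgroup.center P) ≤ p := by
    apply card_le_of_char_comm hp hexp hsymp inferInstance
    intro x y
    ext
    push_cast
    exact zc_comm x.2 y.1
  have h2 : 1 < Nat.card ↥(Subgroup.center P) :=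
    Finite.one_lt_card_iff_nontrivial.mpr inferInstance
  -- the order of a generator divides p
  have hcyc := hsymp (Subgroup.center P) inferInstance
    (fun x y => by ext; push_cast; exact zc_comm x.2 y.1)
  obtain ⟨g, hg⟩ := hcyc.exists_generator
  have h3 : orderOf g = Nat.card ↥(Subgroup.center P) :=
    orderOf_eq_card_of_forall_mem_zpowers hg
  have h4 : orderOf g ∣ p := orderOf_dvd_of_pow_eq_one (by ext; push_cast; exact hexp _)
  rcases (Nat.Prime.eq_one_or_self_of_dvd hp _ h4) with h5 | h5 <;> omega

lemma char_comm_eq_center {p : ℕ} (hp : p.Prime) (hexp : ∀ y : P, y ^ p = 1)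
    (hsymp : ∀ H : Subgroup P, H.Characteristic →
      (∀ x y : ↥H, x * y = y * x) → IsCyclic ↥H)
    (hZcard : Nat.card ↥(Subgroup.center P) = p)
    {W : Subgroup P} (hchar : W.Characteristic) (hcomm : ∀ x y : ↥W, x * y = y * x)
    (hZW : Subgroup.center P ≤ W) : Subgroup.center P = W := by
  apply Subgroup.eq_of_le_of_card_ge hZW
  rw [hZcard]
  exact card_le_of_char_comm hp hexp hsymp hchar hcomm

/-- inside any characteristic-closed `D` strictly above the centre there is an
element `u ∉ Z` with all commutators `q u c`, `c ∈ D`, central. -/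
lemma q_hom {G H : Type} [Group G] [Group H] (f : G →* H) (a b : G) :
    f (q a b) = q (f a) (f b) := by unfold q; simp

lemma exists_almost_central {p : ℕ} (hp : p.Prime) (hpg : IsPGroup p P)
    {D : Subgroup P} (hZD : Subgroup.center P ≤ D) (hD : Subgroup.center P ≠ D) :
    ∃ u, u ∈ D ∧ u ∉ Subgroup.center P ∧ ∀ c ∈ D, q u c ∈ Subgroup.center P := by
  haveI := Fact.mk hp
  set ZD := (Subgroup.center P).subgroupOf D with hZDdef
  haveI : ZD.Normal := Subgroup.normal_subgroupOf
  have hpgQ : IsPGroup p (↥D ⧸ ZD) := (hpg.to_subgroup D).to_quotient ZD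
  obtain ⟨d, hdD, hdZ⟩ := SetLike.exists_of_lt (lt_of_le_of_ne hZD hD)
  haveI : Nontrivial (↥D ⧸ ZD) := by
    refine ⟨⟨((⟨d, hdD⟩ : ↥D) : ↥D ⧸ ZD), 1, ?_⟩⟩
    rw [ne_eq, QuotientGroup.eq_one_iff]
    intro hmem
    exact hdZ ((Subgroup.mem_subgroupOf).mp hmem)
  haveI := hpgQ.center_nontrivial
  obtain ⟨c1, hc1⟩ := exists_ne (1 : ↥(Subgroup.center (↥D ⧸ ZD)))
  obtain ⟨u', hu'⟩ := QuotientGroup.mk_surjective (c1 : ↥D ⧸ ZD)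
  refine ⟨(u' : P), u'.2, ?_, ?_⟩
  · intro hu
    apply hc1
    have h0 : ((u' : ↥D ⧸ ZD)) = 1 :=
      (QuotientGroup.eq_one_iff _).mpr ((Subgroup.mem_subgroupOf).mpr hu)
    ext
    rw [← hu', h0]
    simp
  · intro c hc
    set cD : ↥D := ⟨c, hc⟩
    have h1 : q ((u' : ↥D ⧸ ZD)) ((cD : ↥D ⧸ ZD)) = 1 := by
      apply q_eq_one_of_comm
      rw [hu']
      exact zc_comm c1.2 _
    have h2 : ((q u' cD : ↥D) : ↥D ⧸ ZD) = 1 := by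
      rw [show ((q u' cD : ↥D) : ↥D ⧸ ZD) = q ((u' : ↥D ⧸ ZD)) ((cD : ↥D ⧸ ZD)) from
        q_hom (QuotientGroup.mk' ZD) u' cD, h1]
    have h3 : q u' cD ∈ ZD := (QuotientGroup.eq_one_iff _).mp h2
    have h4 : ((q u' cD : ↥D) : P) ∈ Subgroup.center P := (Subgroup.mem_subgroupOf).mp h3
    have h5 : ((q u' cD : ↥D) : P) = q (u' : P) c := by
      show ((u'⁻¹ * cD⁻¹ * u' * cD : ↥D) : P) = _
      push_cast
      rfl
    rwa [h5] at h4


lemma q_mem_center_all {p : ℕ} (hp : p.Prime) (hexp : ∀ y : P, y ^ p = 1)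
    (hsymp : ∀ H : Subgroup P, H.Characteristic →
      (∀ x y : ↥H, x * y = y * x) → IsCyclic ↥H)
    (hZcard : Nat.card ↥(Subgroup.center P) = p) (hpg : IsPGroup p P) :
    ∀ a b : P, q a b ∈ Subgroup.center P := by
  classical
  set Cc := Subgroup.centralizer ((K P : Subgroup P) : Set P) with hCcdef
  -- the abelian characteristic subgroup Cc ⊓ K equals the centre
  have hWchar : (Cc ⊓ K P).Characteristic :=
    inf_characteristic (centralizer_characteristic inferInstance) inferInstance
  have hWcomm : ∀ x y : ↥(Cc ⊓ K P), x * y = y * x := by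
    rintro ⟨x, hx1, hx2⟩ ⟨y, hy1, hy2⟩
    ext
    push_cast
    exact (Subgroup.mem_centralizer_iff.mp hx1 y hy2).symm
  have hZCc : Subgroup.center P ≤ Cc := fun z hz =>
    Subgroup.mem_centralizer_iff.mpr fun h _ => (zc_comm hz h).symm
  have hZW : Subgroup.center P ≤ Cc ⊓ K P := le_inf hZCc center_le_K
  have hW : Subgroup.center P = Cc ⊓ K P :=
    char_comm_eq_center hp hexp hsymp hZcard hWchar hWcomm hZW
  -- counting data for K
  have hNK : ∀ a ∈ K P, ∀ b : P, q a b ∈ Subgroup.center P := fun a ha b => ha b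
  obtain ⟨k, xs, hxsK, hcardK, hprop⟩ := count_aux hp hexp hNK (Nat.card ↥(K P))
    (Subgroup.center P) (Nat.sub_le _ _) le_rfl center_le_K
  -- the functions w ↦ q d w are Good of weight 0 on K
  have good_fd : ∀ d : P,
      Good p 0 (K P) (fun w => if w ∈ K P then q d w else 1) := by
    intro d
    refine ⟨?_, ?_, ?_⟩
    · intro w
      by_cases h : w ∈ K P
      · simpa [h] using q_mem_center_of_right_K h
      · simp [h]
    · intro z hz
      simp only [if_pos (center_le_K hz), mul_zero, pow_zero]
      exact q_central_right hz d
    · intro a ha b hb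
      simp only [if_pos ha, if_pos hb, if_pos (mul_mem ha hb), pow_zero, mul_one]
      exact q_mul_right' (q_mem_center_of_right_K ha) b
  have good_f1 : Good p 0 (K P) (fun _ => (1 : P)) :=
    ⟨fun _ => one_mem _, fun z _ => by simp, fun a _ b _ => by simp⟩
  have hker : ∀ d : P, (∀ i, q d (xs i) = 1) → ∀ w ∈ K P, q d w = 1 := by
    intro d hd w hw
    have h := hprop 0 (fun w => if w ∈ K P then q d w else 1) (fun _ => 1)
      (good_fd d) good_f1
      (fun z hz => by
        simp only [if_pos (center_le_K hz)]
        exact q_central_right hz d)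
      (fun i => by simp only [if_pos (hxsK i)]; exact hd i) w hw
    simpa [if_pos hw] using h
  -- the homomorphism recording commutators with the xs
  set Ψ : P →* (Fin k → ↥(Subgroup.center P)) := {
    toFun := fun g => fun i => ⟨q g (xs i), q_mem_center_of_right_K (hxsK i)⟩
    map_one' := by funext i; ext; simp [q_one_left]
    map_mul' := by
      intro a b
      funext i
      ext
      push_cast
      exact q_mul_left' (q_mem_center_of_right_K (hxsK i)) b } with hΨdef
  have hΨapp : ∀ (g : P) (i : Fin k), ((Ψ g i : P)) = q g (xs i) := fun g i => rfl
  set Ψ' := Ψ.comp (K P).subtype with hΨ'def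
  have hkerΨ : Ψ'.ker = (Subgroup.center P).subgroupOf (K P) := by
    ext u
    simp only [MonoidHom.mem_ker, Subgroup.mem_subgroupOf]
    constructor
    · intro hu
      have hcomp : ∀ i, q (↑u) (xs i) = 1 := by
        intro i
        have := congrFun hu i
        exact congrArg Subtype.val this
      have h2 := hker ↑u hcomp
      have h3 : (↑u : P) ∈ Cc := Subgroup.mem_centralizer_iff.mpr
        (fun h hh => (comm_of_q_eq_one (h2 h hh)).symm)
      have h4 : (↑u : P) ∈ Cc ⊓ K P := ⟨h3, u.2⟩
      rw [← hW] at h4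
      exact h4
    · intro hu
      funext i
      ext
      show q (↑u) (xs i) = ((1 : Fin k → ↥(Subgroup.center P)) i : P)
      rw [q_central_left hu (xs i)]
      rfl
  have hcard1 : Nat.card ↥(K P) = Nat.card (↥(K P) ⧸ Ψ'.ker) * Nat.card ↥(Ψ'.ker) :=
    Subgroup.card_eq_card_quotient_mul_card_subgroup _
  have hcard2 : Nat.card ↥(Ψ'.ker) = p := by
    rw [hkerΨ, Nat.card_congr (Subgroup.subgroupOfEquivOfLe center_le_K).toEquiv]
    exact hZcard
  have hcard3 : Nat.card (↥(K P) ⧸ Ψ'.ker) = Nat.card ↥Ψ'.range :=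
    Nat.card_congr (QuotientGroup.quotientKerEquivRange Ψ').toEquiv
  have hcardPi : Nat.card (Fin k → ↥(Subgroup.center P)) = p ^ k := by
    rw [Nat.card_pi]
    simp [hZcard]
  have hrangecard : Nat.card ↥Ψ'.range = p ^ k := by
    rw [← hcard3]
    have h5 : Nat.card ↥(K P) = Nat.card (↥(K P) ⧸ Ψ'.ker) * p := by
      rw [hcard1, hcard2]
    rw [hcardK, hZcard] at h5
    have hppos : 0 < p := hp.pos
    nlinarith [Nat.card_pos (α := ↥(K P) ⧸ Ψ'.ker)]
  have hrange : Ψ'.range = ⊤ := Subgroup.eq_top_of_card_eq _ (by rw [hrangecard, hcardPi])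
  have hdecomp : ∀ g : P, ∃ e ∈ K P, g * e⁻¹ ∈ Cc := by
    intro g
    have hmem : Ψ g ∈ Ψ'.range := hrange ▸ Subgroup.mem_top _
    obtain ⟨e, he⟩ := hmem
    refine ⟨↑e, e.2, ?_⟩
    have hne : Ψ (g * (↑e)⁻¹) = 1 := by
      rw [map_mul, map_inv]
      rw [show Ψ ↑e = Ψ' e from rfl, he]
      group
    have hcomp : ∀ i, q (g * (↑e)⁻¹) (xs i) = 1 := by
      intro i
      exact congrArg Subtype.val (congrFun hne i)
    exact Subgroup.mem_centralizer_iff.mpr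
      (fun h hh => (comm_of_q_eq_one (hker _ hcomp h hh)).symm)
  have hCc : Subgroup.center P = Cc := by
    by_contra hne
    obtain ⟨u, huC, huZ, huq⟩ := exists_almost_central hp hpg hZCc hne
    have huK : u ∈ K P := by
      intro b
      obtain ⟨e, heK, hd⟩ := hdecomp b
      have hb : b = (b * e⁻¹) * e := by group
      rw [hb, q_mul_right]
      have h1 : q u e = 1 := q_eq_one_of_comm
        ((Subgroup.mem_centralizer_iff.mp huC e heK).symm)
      have h2 : q u (b * e⁻¹) ∈ Subgroup.center P := huq _ hd
      rw [h1, one_mul]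
      have h3 : e⁻¹ * q u (b * e⁻¹) * e = q u (b * e⁻¹) := by
        rw [mul_assoc, zc_comm h2 e, ← mul_assoc, inv_mul_cancel, one_mul]
      rw [h3]
      exact h2
    have h4 : u ∈ Cc ⊓ K P := ⟨huC, huK⟩
    rw [← hW] at h4
    exact huZ h4
  intro a b
  obtain ⟨e, heK, hd⟩ := hdecomp a
  have ha : a = (a * e⁻¹) * e := by group
  have hdz : a * e⁻¹ ∈ Subgroup.center P := by rw [hCc]; exact hd
  rw [ha, q_mul_left' (by rw [q_central_left hdz]; exact one_mem _),
    q_central_left hdz, one_mul]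
  exact heK b


/-- pointwise product of a weight-`σ` Good function and a weight-`0` Good function. -/
lemma good_mul {p σ : ℕ} (hq : ∀ a b : P, q a b ∈ Subgroup.center P)
    {f μ : P → P} (hf : Good p σ ⊤ f) (hμ : Good p 0 ⊤ μ) :
    Good p σ ⊤ (fun w => f w * μ w) := by
  refine ⟨fun w => mul_mem (hf.1 w) (hμ.1 w), ?_, ?_⟩
  · intro z hz
    simp only
    rw [hf.2.1 z hz, hμ.2.1 z hz, mul_zero, pow_zero, mul_one]
  · intro a _ b _
    simp only
    rw [hf.2.2 a trivial b trivial, hμ.2.2 a trivial b trivial, pow_zero, mul_one]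
    have h1 := hf.1 a
    have h2 := hf.1 b
    have h3 := hμ.1 a
    have h4 := hμ.1 b
    have h5 : q a b ^ σ ∈ Subgroup.center P := pow_mem (hq a b) σ
    calc f a * f b * q a b ^ σ * (μ a * μ b)
        = f a * f b * (q a b ^ σ * (μ a * μ b)) := by group
      _ = f a * f b * (μ a * μ b * q a b ^ σ) := by rw [zc_comm h5 (μ a * μ b)]
      _ = f a * (f b * μ a * (μ b * q a b ^ σ)) := by group
      _ = f a * (μ a * f b * (μ b * q a b ^ σ)) := by rw [zc_comm h2 (μ a)]
      _ = f a * μ a * (f b * μ b) * q a b ^ σ := by group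

/-- separation: homomorphism-like Good functions separate points modulo the centre. -/
lemma separation {p : ℕ} (hp : p.Prime) (hexp : ∀ y : P, y ^ p = 1)
    (hq : ∀ a b : P, q a b ∈ Subgroup.center P)
    (hZcard : Nat.card ↥(Subgroup.center P) = p)
    {w : P} (hw : w ∉ Subgroup.center P) :
    ∃ μ : P → P, Good p 0 ⊤ μ ∧ μ w ≠ 1 := by
  have hN : ∀ a ∈ (⊤ : Subgroup P), ∀ b : P, q a b ∈ Subgroup.center P :=
    fun a _ b => hq a b
  -- a nontrivial central element
  haveI : Nontrivial ↥(Subgroup.center P) := by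
    apply Finite.one_lt_card_iff_nontrivial.mp
    rw [hZcard]
    exact hp.one_lt
  obtain ⟨z₀, hz₀⟩ := exists_ne (1 : ↥(Subgroup.center P))
  have hz₀1 : (z₀ : P) ≠ 1 := by
    intro h
    exact hz₀ (by ext; simpa using h)
  obtain ⟨f0, hf0⟩ := good_base (P := P) p 0
  obtain ⟨g, hg, hgext⟩ := ext_good hp hexp hN le_rfl le_top trivial hw z₀.2 hf0
  have hgw : g w = z₀ := by
    have h1 := hgext 1 (one_mem _) 1
    simpa [good_one hf0] using h1
  obtain ⟨μ, hμ, hμext⟩ := reach_top hp hexp hN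
    (Nat.card ↥(⊤ : Subgroup P)) _ 0 g (Nat.sub_le _ _)
    le_sup_left le_top hg
  refine ⟨μ, hμ, ?_⟩
  have hwmem : w ∈ Subgroup.center P ⊔ Subgroup.zpowers w :=
    Subgroup.mem_sup_right (Subgroup.mem_zpowers w)
  rw [hμext w hwmem, hgw]
  exact hz₀1


end FiniteStuff

end St13

/-- The subgroup `C_{Aut(P)}(Z(P))` of `Aut(P)` consisting of the automorphisms of `P`
fixing the center of `P` elementwise. -/
def centerFixingAuts (P : Type) [Group P] : Subgroup (MulAut P) where
  carrier := {φ : MulAut P | ∀ z ∈ Subgroup.center P, φ z = z}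
  one_mem' := fun _ _ => rfl
  mul_mem' := by
    intro a b ha hb z hz
    simp only [MulAut.mul_apply, hb z hz, ha z hz]
  inv_mem' := by
    intro a ha z hz
    have h := ha z hz
    show a⁻¹ z = z
    calc a⁻¹ z = a⁻¹ (a z) := by rw [h]
      _ = z := by simp

/-- **Proposition 2.1 (i)**: if `P` is a `p`-group of symplectic type (every
characteristic abelian subgroup is cyclic) of exponent `p` (`p` odd) and order
`p^{2m+1}`, then `C = C_{Aut(P)}(Z(P))` embeds into `Sym(p^{2m})`. -/
theorem statement13 (p m : ℕ) (hp : p.Prime) (hodd : Odd p)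
    (P : Type) [Group P] [Finite P]
    (hsymp : ∀ H : Subgroup P, H.Characteristic →
      (∀ x y : H, x * y = y * x) → IsCyclic H)
    (hexp : Monoid.exponent P = p)
    (hcard : Nat.card P = p ^ (2 * m + 1)) :
    ∃ f : centerFixingAuts P →* Equiv.Perm (Fin (p ^ (2 * m))),
      Function.Injective f := by
  classical
  have hexp' : ∀ y : P, y ^ p = 1 := fun y => by
    rw [← hexp]; exact Monoid.pow_exponent_eq_one y
  have hpg : IsPGroup p P := IsPGroup.of_card hcard
  haveI : Nontrivial P := by
    apply Finite.one_lt_card_iff_nontrivial.mp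
    rw [hcard]
    exact Nat.one_lt_pow (by omega) hp.one_lt
  have hZcard := St13.center_card_eq hp hexp' hsymp hpg
  have hq2 := St13.q_mem_center_all hp hexp' hsymp hZcard hpg
  have hN : ∀ a ∈ (⊤ : Subgroup P), ∀ b : P, St13.q a b ∈ Subgroup.center P :=
    fun a _ b => hq2 a b
  obtain ⟨j0, hj0⟩ := hodd
  set s : ℕ := j0 + 1 with hsdef
  have h2s : 2 * s = p + 1 := by omega
  -- a base point of Ω
  obtain ⟨f0, hf0⟩ := St13.good_base (P := P) p s
  obtain ⟨l0, hl0, -⟩ := St13.reach_top hp hexp' hN (Nat.card ↥(⊤ : Subgroup P)) _ s f0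
    (Nat.sub_le _ _) le_rfl le_top hf0
  -- counting data
  obtain ⟨k, xs, hxsT, hcardT, hprop⟩ := St13.count_aux hp hexp' hN
    (Nat.card ↥(⊤ : Subgroup P)) (Subgroup.center P) (Nat.sub_le _ _) le_rfl le_top
  have hk : k = 2 * m := by
    have h1 : Nat.card ↥(⊤ : Subgroup P) = Nat.card P := Subgroup.card_top
    rw [h1, hcard, hZcard] at hcardT
    have h2 : p ^ (2 * m + 1) = p ^ (k + 1) := by rw [hcardT]; ring
    have h3 := Nat.pow_right_injective hp.two_le h2
    omega
  -- the action of C on Good functions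
  have hact : ∀ (α : MulAut P), (∀ z ∈ Subgroup.center P, α z = z) →
      ∀ f : P → P, St13.Good p s ⊤ f → St13.Good p s ⊤ (fun w => f (α w)) := by
    intro α hα f hf
    refine ⟨fun w => hf.1 _, fun z hz => by simp only; rw [hα z hz]; exact hf.2.1 z hz, ?_⟩
    intro a _ b _
    simp only [map_mul]
    rw [hf.2.2 (α a) trivial (α b) trivial]
    congr 2
    rw [← St13.q_map (α : P ≃* P) a b, hα _ (hq2 a b)]
  let T : ↥(centerFixingAuts P) → {f : P → P // St13.Good p s ⊤ f} →
      {f : P → P // St13.Good p s ⊤ f} := fun α f =>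
    ⟨fun w => f.1 ((α⁻¹ : ↥(centerFixingAuts P)).1 w), hact _ (α⁻¹).2 f.1 f.2⟩
  have hT_one : ∀ f, T 1 f = f := by
    intro f
    apply Subtype.ext
    funext w
    show f.1 (((1 : ↥(centerFixingAuts P))⁻¹).1 w) = f.1 w
    rw [inv_one]
    rfl
  have hT_mul : ∀ α β f, T (α * β) f = T α (T β f) := by
    intro α β f
    apply Subtype.ext
    funext w
    show f.1 (((α * β)⁻¹).1 w) = f.1 ((β⁻¹).1 ((α⁻¹).1 w))
    rw [mul_inv_rev]
    rfl
  let F : ↥(centerFixingAuts P) →* Equiv.Perm {f : P → P // St13.Good p s ⊤ f} := {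
    toFun := fun α => {
      toFun := T α
      invFun := T α⁻¹
      left_inv := fun f => by rw [← hT_mul, inv_mul_cancel, hT_one]
      right_inv := fun f => by rw [← hT_mul, mul_inv_cancel, hT_one] }
    map_one' := Equiv.ext fun f => hT_one f
    map_mul' := fun α β => Equiv.ext fun f => hT_mul α β f }
  -- counting Ω
  have hcount : Nat.card {f : P → P // St13.Good p s ⊤ f} ≤ p ^ (2 * m) := by
    have hinj : Function.Injective (fun f : {f : P → P // St13.Good p s ⊤ f} =>
        fun i : Fin k => (⟨f.1 (xs i), f.2.1 _⟩ : ↥(Subgroup.center P))) := by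
      intro f g hfg
      apply Subtype.ext
      funext w
      apply hprop s f.1 g.1 f.2 g.2 ?_ ?_ w trivial
      · intro z hz
        rw [f.2.2.1 z hz, g.2.2.1 z hz]
      · intro i
        exact congrArg Subtype.val (congrFun hfg i)
    calc Nat.card {f : P → P // St13.Good p s ⊤ f}
        ≤ Nat.card (Fin k → ↥(Subgroup.center P)) :=
          Nat.card_le_card_of_injective _ hinj
      _ = p ^ (2 * m) := by rw [Nat.card_pi]; simp [hZcard, hk]
  haveI : Fintype {f : P → P // St13.Good p s ⊤ f} := Fintype.ofFinite _
  obtain ⟨e⟩ : Nonempty ({f : P → P // St13.Good p s ⊤ f} ↪ Fin (p ^ (2 * m))) := by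
    apply Function.Embedding.nonempty_iff_card_le.mpr
    rw [← Nat.card_eq_fintype_card (α := {f : P → P // St13.Good p s ⊤ f})]
    simpa using hcount
  have hFinj : Function.Injective F := by
    apply (injective_iff_map_eq_one F).mpr
    intro α hα1
    have hfix : ∀ (f : {f : P → P // St13.Good p s ⊤ f}) (w : P),
        f.1 ((α⁻¹ : ↥(centerFixingAuts P)).1 w) = f.1 w := by
      intro f w
      have h1 : F α f = f := by rw [hα1]; rfl
      exact congrFun (congrArg Subtype.val h1) w
    have hstep1 : ∀ x : P, (α⁻¹ : ↥(centerFixingAuts P)).1 x * x⁻¹ ∈ Subgroup.center P := by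
      by_contra hcon
      push_neg at hcon
      obtain ⟨x, hx⟩ := hcon
      obtain ⟨μ, hμ, hμx⟩ := St13.separation hp hexp' hq2 hZcard hx
      have hμfix : ∀ w, μ ((α⁻¹ : ↥(centerFixingAuts P)).1 w) = μ w := by
        intro w
        have h1 := hfix ⟨l0, hl0⟩ w
        have h2 := hfix ⟨fun y => l0 y * μ y, St13.good_mul hq2 hl0 hμ⟩ w
        simp only at h1 h2
        rw [h1] at h2
        exact mul_left_cancel h2
      have hμmul : ∀ a b : P, μ (a * b) = μ a * μ b := by
        intro a b
        have := hμ.2.2 a trivial b trivial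
        simpa using this
      have h3 := hμfix x
      have h4 : (α⁻¹ : ↥(centerFixingAuts P)).1 x =
          ((α⁻¹ : ↥(centerFixingAuts P)).1 x * x⁻¹) * x := by group
      rw [h4, hμmul] at h3
      exact hμx (mul_right_cancel (h3.trans (one_mul (μ x)).symm))
    have hstep2 : ∀ x : P, (α⁻¹ : ↥(centerFixingAuts P)).1 x = x := by
      intro x
      have hwz := hstep1 x
      have h1 := hfix ⟨l0, hl0⟩ x
      simp only at h1
      have h4 : (α⁻¹ : ↥(centerFixingAuts P)).1 x =
          ((α⁻¹ : ↥(centerFixingAuts P)).1 x * x⁻¹) * x := by group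
      rw [h4, hl0.2.2 _ trivial x trivial, hl0.2.1 _ hwz, St13.q_central_left hwz,
        one_pow, mul_one] at h1
      have h5 : ((α⁻¹ : ↥(centerFixingAuts P)).1 x * x⁻¹) ^ (2 * s) = 1 :=
        mul_right_cancel (h1.trans (one_mul (l0 x)).symm)
      rw [h2s, pow_succ, hexp', one_mul] at h5
      rw [h4, h5, one_mul]
    have hγ : (α⁻¹ : ↥(centerFixingAuts P)) = 1 := by
      apply Subtype.ext
      ext x
      exact hstep2 x
    exact inv_eq_one.mp hγ
  refine ⟨(Equiv.Perm.viaEmbeddingHom e).comp F, ?_⟩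
  rw [MonoidHom.coe_comp]
  exact (Equiv.Perm.viaEmbeddingHom_injective e).comp hFinj
end

section
/- Let G be a finite group of order n such that every nontrivial complex representation of G has degree at least k (k ≥ 1), and let B ⊆ G be a symmetric subset, i.e., B = B⁻¹. Define the linear operator X on the space ℂ^G of complex-valued functions on G (with the standard Hermitian inner product, so the indicator functions of elements of G form an orthonormal basis) by (Xf)(g) = Σ_{b ∈ B} f(g·b). Then for every v ∈ ℂ^G with Σ_{g ∈ G} v(g) = 0, one has ‖Xv‖² ≤ (n·|B|/k)·‖v‖². -/
open Finset
open scoped InnerProductSpace ComplexConjugate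

noncomputable section St19Aux

variable {G : Type} [Group G] [Fintype G] [DecidableEq G]

/-- The summation functional on `ℂ^G`. -/
def st19sumF (G : Type) [Fintype G] : EuclideanSpace ℂ G →ₗ[ℂ] ℂ where
  toFun f := ∑ g, f g
  map_add' f₁ f₂ := by
    simpa using Finset.sum_add_distrib
  map_smul' c f := by
    simpa using (Finset.mul_sum _ _ _).symm

/-- The subspace of mean-zero functions. -/
def st19W (G : Type) [Fintype G] : Submodule ℂ (EuclideanSpace ℂ G) :=
  LinearMap.ker (st19sumF G)

/-- The adjacency operator `(Xf)(g) = ∑_{b∈B} f (g*b)`. -/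
def st19X (B : Finset G) : EuclideanSpace ℂ G →ₗ[ℂ] EuclideanSpace ℂ G where
  toFun f := WithLp.toLp 2 (fun g => ∑ b ∈ B, f (g * b))
  map_add' f₁ f₂ := PiLp.ext fun g => by
    simp [Finset.sum_add_distrib]
  map_smul' c f := PiLp.ext fun g => by
    simp [Finset.mul_sum]

/-- Left translation operator. -/
def st19L (h : G) : EuclideanSpace ℂ G →ₗ[ℂ] EuclideanSpace ℂ G where
  toFun f := WithLp.toLp 2 (fun g => f (h⁻¹ * g))
  map_add' f₁ f₂ := PiLp.ext fun g => by simp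
  map_smul' c f := PiLp.ext fun g => by simp

lemma st19X_apply (B : Finset G) (f : EuclideanSpace ℂ G) (g : G) :
    st19X B f g = ∑ b ∈ B, f (g * b) := rfl

lemma st19L_apply (h : G) (f : EuclideanSpace ℂ G) (g : G) :
    st19L h f g = f (h⁻¹ * g) := rfl

lemma st19X_mem_W (B : Finset G) (f : EuclideanSpace ℂ G) (hf : f ∈ st19W G) :
    st19X B f ∈ st19W G := by
  have hf' : ∑ g, f g = 0 := hf
  show (∑ g, ∑ b ∈ B, f (g * b)) = 0
  rw [Finset.sum_comm]
  refine Finset.sum_eq_zero fun b _ => ?_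
  rw [← hf']
  exact Fintype.sum_equiv (Equiv.mulRight b) _ _ (fun g => rfl)

lemma st19L_mem_W (h : G) (f : EuclideanSpace ℂ G) (hf : f ∈ st19W G) :
    st19L h f ∈ st19W G := by
  have hf' : ∑ g, f g = 0 := hf
  show (∑ g, f (h⁻¹ * g)) = 0
  rw [← hf']
  exact Fintype.sum_equiv (Equiv.mulLeft h⁻¹) _ _ (fun g => rfl)

lemma st19X_comm_L (B : Finset G) (h : G) (f : EuclideanSpace ℂ G) :
    st19X B (st19L h f) = st19L h (st19X B f) := by
  ext g
  show (∑ b ∈ B, f (h⁻¹ * (g * b))) = ∑ b ∈ B, f (h⁻¹ * g * b)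
  exact Finset.sum_congr rfl fun b _ => by rw [mul_assoc]

lemma st19X_symm (B : Finset G) (hB : ∀ b ∈ B, b⁻¹ ∈ B) :
    ∀ f u : EuclideanSpace ℂ G, ⟪st19X B f, u⟫_ℂ = ⟪f, st19X B u⟫_ℂ := by
  intro f u
  have lhs : ⟪st19X B f, u⟫_ℂ = ∑ b ∈ B, ∑ g, conj (f (g * b)) * u g := by
    rw [PiLp.inner_apply, Finset.sum_comm]
    refine Finset.sum_congr rfl fun g _ => ?_
    simp [st19X_apply, Finset.sum_mul]
    rw [Finset.mul_sum]; exact Finset.sum_congr rfl fun _ _ => mul_comm _ _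
  have rhs : ⟪f, st19X B u⟫_ℂ = ∑ b ∈ B, ∑ g, conj (f g) * u (g * b) := by
    rw [PiLp.inner_apply, Finset.sum_comm]
    refine Finset.sum_congr rfl fun g _ => ?_
    simp [st19X_apply, Finset.mul_sum]
    rw [Finset.sum_mul]; exact Finset.sum_congr rfl fun _ _ => mul_comm _ _
  rw [lhs, rhs]
  refine Finset.sum_nbij' (fun b => b⁻¹) (fun b => b⁻¹) (fun b hb => hB b hb)
    (fun b hb => hB b hb) (fun b _ => inv_inv b) (fun b _ => inv_inv b) ?_
  intro b _
  refine Fintype.sum_equiv (Equiv.mulRight b) _ _ fun g => ?_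
  show conj (f (g * b)) * u g = conj (f (g * b)) * u (g * b * b⁻¹)
  rw [mul_inv_cancel_right]

end St19Aux

set_option maxHeartbeats 1000000 in
/-- **Key spectral estimate in the appendix**: let `G` be a finite group of order `n`
all of whose nontrivial complex representations have degree at least `k`, and let
`B ⊆ G` be symmetric (`B = B⁻¹`). Let `X` be the operator on `ℂ^G` given by
`(Xf)(g) = Σ_{b ∈ B} f(g·b)`. Then for every `v : G → ℂ` with `Σ_g v(g) = 0` one has
`‖Xv‖² ≤ (n·|B|/k)·‖v‖²`. -/
theorem statement19 {G : Type} [Group G] [Fintype G] [DecidableEq G] (n k : ℕ)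
    (hn : Fintype.card G = n) (hk : 1 ≤ k)
    (hrep : ∀ (V : Type) [AddCommGroup V] [Module ℂ V] [FiniteDimensional ℂ V]
      (ρ : Representation ℂ G V), ρ ≠ 1 → k ≤ Module.finrank ℂ V)
    (B : Finset G) (hB : ∀ b ∈ B, b⁻¹ ∈ B)
    (v : G → ℂ) (hv : ∑ g : G, v g = 0) :
    ∑ g : G, ‖∑ b ∈ B, v (g * b)‖ ^ 2 ≤
      (n : ℝ) * B.card / k * ∑ g : G, ‖v g‖ ^ 2 := by
  classical
  set W : Submodule ℂ (EuclideanSpace ℂ G) := st19W G with hWdef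
  letI iN : NormedAddCommGroup ↥W := inferInstance
  letI iI : InnerProductSpace ℂ ↥W := inferInstance
  letI iF : FiniteDimensional ℂ ↥W := inferInstance
  -- the restriction of X to W
  have hXmem : ∀ f ∈ W, st19X B f ∈ W := fun f hf => st19X_mem_W B f hf
  set Xw : W →ₗ[ℂ] W := (st19X B).restrict hXmem with hXwdef
  have hXw_coe : ∀ x : W, (Xw x : EuclideanSpace ℂ G) = st19X B (x : EuclideanSpace ℂ G) :=
    fun x => rfl
  -- symmetry
  have hXwsymm : Xw.IsSymmetric := by
    intro x y
    have : ⟪st19X B (x : EuclideanSpace ℂ G), (y : EuclideanSpace ℂ G)⟫_ℂ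
        = ⟪(x : EuclideanSpace ℂ G), st19X B (y : EuclideanSpace ℂ G)⟫_ℂ :=
      st19X_symm B hB _ _
    simpa [Submodule.coe_inner, hXw_coe] using this
  set m : ℕ := Module.finrank ℂ W with hm
  have hmrank : Module.finrank ℂ W = m := rfl
  set bW : OrthonormalBasis (Fin m) ℂ W := hXwsymm.eigenvectorBasis hmrank with hbW
  set lam : Fin m → ℝ := hXwsymm.eigenvalues hmrank with hlam
  have happly : ∀ i, Xw (bW i) = (lam i : ℂ) • bW i :=
    fun i => hXwsymm.apply_eigenvectorBasis hmrank i
  -- Bessel-type bound: ∑ j, (lam j)^2 ≤ n * |B|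
  have hb_on : Orthonormal ℂ (fun j => ((bW j : W) : EuclideanSpace ℂ G)) :=
    bW.orthonormal.comp_linearIsometry W.subtypeₗᵢ
  have htrace : ∑ j, (lam j) ^ 2 ≤ (n : ℝ) * B.card := by
    -- (lam j)^2 = ‖X (bW j)‖²
    have h1 : ∀ j, (lam j) ^ 2
        = ∑ g, ‖st19X B ((bW j : W) : EuclideanSpace ℂ G) g‖ ^ 2 := by
      intro j
      have h2 : ‖st19X B ((bW j : W) : EuclideanSpace ℂ G)‖ ^ 2
          = ∑ g, ‖st19X B ((bW j : W) : EuclideanSpace ℂ G) g‖ ^ 2 :=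
        PiLp.norm_sq_eq_of_L2 _ _
      rw [← h2, ← hXw_coe, happly j]
      have hnorm1 : ‖(bW j : W)‖ = 1 := bW.orthonormal.1 j
      rw [Submodule.coe_smul]
      rw [norm_smul]
      have : ‖((bW j : W) : EuclideanSpace ℂ G)‖ = 1 := by
        rwa [Submodule.norm_coe]
      rw [this, mul_one, Complex.norm_real, Real.norm_eq_abs, sq_abs]
    -- entries: X f g = ⟪χ_g, f⟫
    set chi : G → EuclideanSpace ℂ G :=
      fun g => WithLp.toLp 2 (fun h => if g⁻¹ * h ∈ B then (1 : ℂ) else 0) with hchi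
    have hchi_inner : ∀ (g : G) (f : EuclideanSpace ℂ G),
        ⟪chi g, f⟫_ℂ = st19X B f g := by
      intro g f
      rw [PiLp.inner_apply, st19X_apply]
      simp only [RCLike.inner_apply]
      simp only [mul_comm (f _)]
      have : ∑ h : G, (starRingEnd ℂ) (chi g h) * f h
          = ∑ h ∈ Finset.univ.filter (fun h => g⁻¹ * h ∈ B), f h := by
        rw [Finset.sum_filter]
        refine Finset.sum_congr rfl fun h _ => ?_
        by_cases hgh : g⁻¹ * h ∈ B <;> simp [hchi, hgh]
      rw [this]
      refine Finset.sum_nbij' (i := fun h => g⁻¹ * h) (j := fun b => g * b) ?_ ?_ ?_ ?_ ?_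
      · intro h hmem
        simpa using (Finset.mem_filter.mp hmem).2
      · intro b hb
        simp [hb]
      · intro h _
        simp
      · intro b _
        simp
      · intro h _
        rw [mul_inv_cancel_left]
    have hchi_norm : ∀ g : G, ‖chi g‖ ^ 2 = (B.card : ℝ) := by
      intro g
      rw [PiLp.norm_sq_eq_of_L2]
      have : ∀ h : G, ‖chi g h‖ ^ 2 = if g⁻¹ * h ∈ B then (1:ℝ) else 0 := by
        intro h
        by_cases hgh : g⁻¹ * h ∈ B <;> simp [hchi, hgh]
      rw [Finset.sum_congr rfl fun h _ => this h, Finset.sum_boole]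
      congr 1
      refine Finset.card_nbij' (fun h => g⁻¹ * h) (fun b => g * b) ?_ ?_ ?_ ?_
      · intro h hmem
        simpa using (Finset.mem_filter.mp hmem).2
      · intro b hb
        simpa using hb
      · intro h _
        simp
      · intro b _
        simp
    calc ∑ j, (lam j) ^ 2
        = ∑ j, ∑ g, ‖⟪chi g, ((bW j : W) : EuclideanSpace ℂ G)⟫_ℂ‖ ^ 2 := by
          refine Finset.sum_congr rfl fun j _ => ?_
          rw [h1 j]
          exact Finset.sum_congr rfl fun g _ => by rw [hchi_inner]
      _ = ∑ g, ∑ j, ‖⟪((bW j : W) : EuclideanSpace ℂ G), chi g⟫_ℂ‖ ^ 2 := by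
          rw [Finset.sum_comm]
          refine Finset.sum_congr rfl fun g _ => Finset.sum_congr rfl fun j _ => ?_
          rw [norm_inner_symm]
      _ ≤ ∑ g : G, ‖chi g‖ ^ 2 :=
          Finset.sum_le_sum fun g _ => hb_on.sum_inner_products_le (chi g)
      _ = (n : ℝ) * B.card := by
          rw [Finset.sum_congr rfl fun g _ => hchi_norm g]
          simp [hn, mul_comm]
  -- eigenvalue bound via representation theory
  have hlam_bound : ∀ i, (lam i) ^ 2 * k ≤ (n : ℝ) * B.card := by
    intro i
    set V : Submodule ℂ W := Module.End.eigenspace (Xw : Module.End ℂ W) ((lam i : ℝ) : ℂ)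
      with hV
    -- bW i ∈ V
    have hbiV : bW i ∈ V := by
      rw [hV, Module.End.mem_eigenspace_iff]
      exact happly i
    -- left translation restricted to W
    have hLmem : ∀ h : G, ∀ f ∈ W, st19L h f ∈ W := fun h f hf => st19L_mem_W h f hf
    set Lw : G → (W →ₗ[ℂ] W) := fun h => (st19L h).restrict (hLmem h) with hLw
    have hLw_coe : ∀ (h : G) (x : W),
        ((Lw h x : W) : EuclideanSpace ℂ G) = st19L h (x : EuclideanSpace ℂ G) := fun h x => rfl
    have hLwXw : ∀ (h : G) (x : W), Xw (Lw h x) = Lw h (Xw x) := by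
      intro h x
      apply Subtype.ext
      rw [hXw_coe, hLw_coe, hLw_coe, hXw_coe]
      exact st19X_comm_L B h _
    have hLV : ∀ h : G, ∀ x ∈ V, Lw h x ∈ V := by
      intro h x hx
      rw [hV, Module.End.mem_eigenspace_iff] at hx ⊢
      rw [hLwXw, hx, map_smul]
    -- the representation on V
    set ρ : Representation ℂ G V :=
      { toFun := fun h => (Lw h).restrict (hLV h)
        map_one' := by
          apply LinearMap.ext
          intro x
          apply Subtype.ext
          apply Subtype.ext
          show st19L (1 : G) ((x : W) : EuclideanSpace ℂ G) = _
          ext g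
          rw [st19L_apply, inv_one, one_mul]
          rfl
        map_mul' := by
          intro h₁ h₂
          apply LinearMap.ext
          intro x
          apply Subtype.ext
          apply Subtype.ext
          show st19L (h₁ * h₂) ((x : W) : EuclideanSpace ℂ G)
            = st19L h₁ (st19L h₂ ((x : W) : EuclideanSpace ℂ G))
          ext g
          rw [st19L_apply, st19L_apply, st19L_apply, mul_inv_rev, mul_assoc] } with hρ
    -- ρ is nontrivial
    have hρne : ρ ≠ 1 := by
      intro hcontra
      have hfix : ∀ (x : V) (h : G), ((((x : W) : EuclideanSpace ℂ G)) : G → ℂ)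
          = fun g => ((x : W) : EuclideanSpace ℂ G) (h⁻¹ * g) := by
        intro x h
        have : ρ h x = x := by rw [hcontra]; rfl
        have h2 : ((((ρ h x : V) : W)) : EuclideanSpace ℂ G)
            = (((x : V) : W) : EuclideanSpace ℂ G) := by rw [this]
        have h3 : st19L h (((x : V) : W) : EuclideanSpace ℂ G)
            = (((x : V) : W) : EuclideanSpace ℂ G) := h2
        funext g
        have := congrFun (congrArg WithLp.ofLp h3) g
        rw [st19L_apply] at this
        exact this.symm
      -- every element of V is constant, hence zero
      have hzero : ∀ x : V, x = 0 := by
        intro x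
        have hconst : ∀ g : G, (((x : V) : W) : EuclideanSpace ℂ G) g
            = (((x : V) : W) : EuclideanSpace ℂ G) 1 := by
          intro g
          have h4 := congrFun (hfix x g) g
          rw [inv_mul_cancel] at h4
          exact h4
        have hsum : ∑ g : G, (((x : V) : W) : EuclideanSpace ℂ G) g = 0 := (x : W).2
        rw [Finset.sum_congr rfl fun g _ => hconst g, Finset.sum_const] at hsum
        have hcard : (Fintype.card G : ℂ) ≠ 0 := by
          simp [Fintype.card_ne_zero]
        have hone : (((x : V) : W) : EuclideanSpace ℂ G) 1 = 0 := by
          rw [Finset.card_univ, nsmul_eq_mul] at hsum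
          rcases mul_eq_zero.mp hsum with h5 | h5
          · exact absurd h5 hcard
          · exact h5
        apply Subtype.ext
        apply Subtype.ext
        ext g
        rw [hconst g, hone]
        rfl
      have : (bW i : W) = 0 := by
        have := hzero ⟨bW i, hbiV⟩
        simpa using congrArg (Subtype.val) this
      have hnorm1 : ‖(bW i : W)‖ = 1 := bW.orthonormal.1 i
      rw [this] at hnorm1
      simp at hnorm1
    have hdimV : k ≤ Module.finrank ℂ V := hrep V ρ hρne
    -- V is contained in the span of eigenbasis vectors with eigenvalue lam i
    set s : Finset (Fin m) := Finset.univ.filter (fun j => lam j = lam i) with hs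
    have hVle : V ≤ Submodule.span ℂ ((s.image bW : Finset W) : Set W) := by
      intro x hx
      rw [hV, Module.End.mem_eigenspace_iff] at hx
      have hrep0 : ∀ j, lam j ≠ lam i → bW.repr x j = 0 := by
        intro j hj
        have h1 : ⟪Xw (bW j), x⟫_ℂ = ⟪bW j, Xw x⟫_ℂ := hXwsymm (bW j) x
        rw [happly j, hx, inner_smul_left, inner_smul_right] at h1
        rw [Complex.conj_ofReal] at h1
        have h2 : ((lam j : ℂ) - (lam i : ℂ)) * ⟪bW j, x⟫_ℂ = 0 := by ring_nf; linear_combination h1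
        rcases mul_eq_zero.mp h2 with h3 | h3
        · exfalso
          apply hj
          have := sub_eq_zero.mp h3
          exact_mod_cast this
        · rw [bW.repr_apply_apply]; exact h3
      have hxsum : x = ∑ j ∈ s, bW.repr x j • bW j := by
        conv_lhs => rw [← bW.sum_repr x]
        rw [← Finset.sum_filter_add_sum_filter_not Finset.univ (fun j => lam j = lam i)]
        have : ∑ j ∈ Finset.univ.filter (fun j => ¬ lam j = lam i), bW.repr x j • bW j = 0 := by
          refine Finset.sum_eq_zero fun j hj => ?_
          rw [hrep0 j (Finset.mem_filter.mp hj).2]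
          simp
        rw [this, add_zero]
      rw [hxsum]
      refine Submodule.sum_mem _ fun j hj => Submodule.smul_mem _ _ ?_
      apply Submodule.subset_span
      simp only [Finset.coe_image, Set.mem_image, Finset.mem_coe]
      exact ⟨j, hj, rfl⟩
    have hk_le_s : k ≤ s.card := by
      calc k ≤ Module.finrank ℂ V := hdimV
        _ ≤ Module.finrank ℂ (Submodule.span ℂ ((s.image bW : Finset W) : Set W)) :=
            Submodule.finrank_mono hVle
        _ ≤ (s.image bW).card := finrank_span_finset_le_card _
        _ ≤ s.card := Finset.card_image_le
    -- now  (lam i)^2 * k ≤ ∑_{j ∈ s} (lam j)^2 ≤ ∑_j (lam j)^2 ≤ n |B|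
    have h1 : (lam i) ^ 2 * k ≤ ∑ j ∈ s, (lam j) ^ 2 := by
      have : ∑ j ∈ s, (lam j) ^ 2 = s.card * (lam i) ^ 2 := by
        rw [Finset.sum_congr rfl (fun j hj => by rw [(Finset.mem_filter.mp hj).2]),
          Finset.sum_const, nsmul_eq_mul]
      rw [this, mul_comm]
      apply mul_le_mul_of_nonneg_right _ (sq_nonneg _)
      exact_mod_cast hk_le_s
    calc (lam i) ^ 2 * k ≤ ∑ j ∈ s, (lam j) ^ 2 := h1
      _ ≤ ∑ j, (lam j) ^ 2 :=
          Finset.sum_le_sum_of_subset_of_nonneg (Finset.filter_subset _ _)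
            (fun j _ _ => sq_nonneg _)
      _ ≤ (n : ℝ) * B.card := htrace
  -- final assembly
  have hkpos : (0 : ℝ) < k := by exact_mod_cast hk
  have hlam_bound' : ∀ i, (lam i) ^ 2 ≤ (n : ℝ) * B.card / k := by
    intro i
    rw [le_div_iff₀ hkpos]
    exact hlam_bound i
  set ve : EuclideanSpace ℂ G := WithLp.toLp 2 v with hve
  have hveW : ve ∈ W := hv
  set w : W := ⟨ve, hveW⟩ with hw
  have hLHS : ∑ g : G, ‖∑ b ∈ B, v (g * b)‖ ^ 2 = ‖Xw w‖ ^ 2 := by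
    rw [← Submodule.norm_coe (Xw w), hXw_coe, PiLp.norm_sq_eq_of_L2]
    all_goals rfl
  have hRHS : ∑ g : G, ‖v g‖ ^ 2 = ‖w‖ ^ 2 := by
    rw [← Submodule.norm_coe w, PiLp.norm_sq_eq_of_L2]
    all_goals rfl
  rw [hLHS, hRHS]
  have hXw_norm : ‖Xw w‖ ^ 2 = ∑ i, (lam i) ^ 2 * ‖bW.repr w i‖ ^ 2 := by
    rw [← bW.repr.norm_map (Xw w), PiLp.norm_sq_eq_of_L2]
    refine Finset.sum_congr rfl fun i _ => ?_
    rw [hXwsymm.eigenvectorBasis_apply_self_apply hmrank w i]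
    rw [norm_mul, mul_pow, RCLike.norm_ofReal, sq_abs]
  have hw_norm : ‖w‖ ^ 2 = ∑ i, ‖bW.repr w i‖ ^ 2 := by
    rw [← bW.repr.norm_map w, PiLp.norm_sq_eq_of_L2]
  rw [hXw_norm, hw_norm, Finset.mul_sum]
  refine Finset.sum_le_sum fun i _ => ?_
  exact mul_le_mul_of_nonneg_right (hlam_bound' i) (sq_nonneg _)
end
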